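/- arXiv:1810.06093 — 9 statements merged into one kernel-verified Lean document; each statement's English description precedes it below -/
import Mathlib

section
/- Let A, B be sets with B infinite, let E ⊆ A × B be a relation with (∀a∈A)(∃b∈B)(a E b), and let κ be an uncountable cardinal. Suppose that κ equals both |B| and the evaluation of ⟨A,B,E⟩ (i.e. the associated cardinal characteristic is as large as possible). Then for every family ℱ of finitary operations on B with |ℱ| < κ, there exists a ⟨⟨A,B,E⟩, ℱ, κ⟩-pathway. -/
open Cardinal Set

/-- A subset `S` is closed under a finitary operation `F` (presented as a pair of an
arity `n` and a function `(Fin n → B) → B`). -/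
def ClosedUnderOp {B : Type*} (S : Set B) (F : Σ n : ℕ, (Fin n → B) → B) : Prop :=
  ∀ v : Fin F.1 → B, (∀ i, v i ∈ S) → F.2 v ∈ S

/-- `IsPathway E 𝓕 δ seq` says that `⟨seq α : α < δ⟩` is a
`⟨⟨A,B,E⟩, 𝓕, δ⟩`-pathway: an increasing continuous sequence of subsets of `B`
whose union is all of `B`, such that no `seq α` is `E`-dominating, and with each
`seq α` closed under every operation in `𝓕`. -/
structure IsPathway {A B : Type*} (E : A → B → Prop)
    (𝓕 : Set (Σ n : ℕ, (Fin n → B) → B)) (δ : Ordinal)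
    (seq : Ordinal → Set B) : Prop where
  mono : ∀ α β : Ordinal, α ≤ β → β < δ → seq α ⊆ seq β
  cont : ∀ γ : Ordinal, γ < δ → Order.IsSuccLimit γ → seq γ = ⋃ α : Ordinal, ⋃ _ : α < γ, seq α
  total : (⋃ α : Ordinal, ⋃ _ : α < δ, seq α) = Set.univ
  avoid : ∀ α : Ordinal, α < δ → ∃ x : A, ∀ y ∈ seq α, ¬ E x y
  closedF : ∀ α : Ordinal, α < δ → ∀ F ∈ 𝓕, ClosedUnderOp (seq α) F

/-- The evaluation of the triple `⟨A, B, E⟩`: the least cardinality of an `E`-dominating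
family `X ⊆ B`, i.e. of an `X` such that every `a ∈ A` is `E`-related to some `b ∈ X`. -/
noncomputable def evalTriple {A B : Type u} (E : A → B → Prop) : Cardinal.{u} :=
  sInf {c | ∃ X : Set B, #X = c ∧ ∀ a : A, ∃ b ∈ X, E a b}

section Aux

universe v
variable {B : Type v}

/-- Inductive closure of a set under a family of finitary operations. -/
inductive Cl (𝓕 : Set (Σ n : ℕ, (Fin n → B) → B)) (S : Set B) : B → Prop
  | base {b : B} : b ∈ S → Cl 𝓕 S b
  | app {F : Σ n : ℕ, (Fin n → B) → B} (hF : F ∈ 𝓕) (v : Fin F.1 → B)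
      (hv : ∀ i, Cl 𝓕 S (v i)) : Cl 𝓕 S (F.2 v)

theorem Cl_mono {𝓕 : Set (Σ n : ℕ, (Fin n → B) → B)} {S T : Set B} (hST : S ⊆ T)
    {b : B} (hb : Cl 𝓕 S b) : Cl 𝓕 T b := by
  induction hb with
  | base h => exact Cl.base (hST h)
  | app hF v hv ih => exact Cl.app hF v ih

/-- evaluation of terms -/
def evalW (𝓕 : Set (Σ n : ℕ, (Fin n → B) → B)) (S : Set B) :
    WType (fun a : ↥S ⊕ ↥𝓕 => Fin (Sum.elim (fun _ => 0) (fun F => F.1.1) a)) → B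
  | WType.mk (Sum.inl s) _ => s.1
  | WType.mk (Sum.inr F) f => F.1.2 (fun i => evalW 𝓕 S (f i))

theorem Cl_mem_range {𝓕 : Set (Σ n : ℕ, (Fin n → B) → B)} {S : Set B} {b : B}
    (hb : Cl 𝓕 S b) : ∃ w, evalW 𝓕 S w = b := by
  induction hb with
  | base h => exact ⟨WType.mk (Sum.inl ⟨_, h⟩) Fin.elim0, rfl⟩
  | app hF v hv ih =>
      choose w hw using ih
      exact ⟨WType.mk (Sum.inr ⟨_, hF⟩) w, by simp only [evalW, hw]⟩

theorem Cl_card [Nonempty B] (𝓕 : Set (Σ n : ℕ, (Fin n → B) → B)) (S : Set B) :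
    #{b | Cl 𝓕 S b} ≤ max (#S + #𝓕) ℵ₀ := by
  have h1 : {b | Cl 𝓕 S b} ⊆ Set.range (evalW 𝓕 S) := fun b hb => Cl_mem_range hb
  haveI : Nonempty ((n : ℕ) × ((Fin n → B) → B)) := ⟨⟨0, fun _ => Classical.arbitrary B⟩⟩
  refine (mk_le_mk_of_subset h1).trans (mk_range_le.trans ?_)
  refine (WType.cardinalMk_le_max_aleph0_of_finite').trans ?_
  simp

theorem Cl_iUnion {𝓕 : Set (Σ n : ℕ, (Fin n → B) → B)} (S : Ordinal → Set B)
    (hS : ∀ α β : Ordinal, α ≤ β → S α ⊆ S β) {γ : Ordinal} (hγ : Order.IsSuccLimit γ) {b : B}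
    (hb : Cl 𝓕 (⋃ α : Ordinal, ⋃ _ : α < γ, S α) b) : ∃ α < γ, Cl 𝓕 (S α) b := by
  induction hb with
  | base h =>
      simp only [mem_iUnion] at h
      obtain ⟨α, hα, h⟩ := h
      exact ⟨α, hα, Cl.base h⟩
  | app hF v hv ih =>
      choose g hg hcl using ih
      refine ⟨Finset.univ.sup g, ?_, ?_⟩
      · rw [Finset.sup_lt_iff (by simpa using hγ.bot_lt)]
        exact fun i _ => hg i
      · exact Cl.app hF v fun i =>
          Cl_mono (hS (g i) _ (Finset.le_sup (Finset.mem_univ i))) (hcl i)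

end Aux

/-- if `B` is infinite, `κ` is an uncountable cardinal equal both to `|B|`
and to the evaluation of `⟨A,B,E⟩`, then for every family `𝓕` of finitary operations on
`B` with `|𝓕| < κ` there is a `⟨⟨A,B,E⟩, 𝓕, κ⟩`-pathway. -/
theorem stmt2 {A B : Type u} [Infinite B] (E : A → B → Prop)
    (hE : ∀ a : A, ∃ b : B, E a b) (κ : Cardinal.{u}) (hunc : ℵ₀ < κ)
    (hκB : κ = #B) (hκx : κ = evalTriple E)
    (𝓕 : Set (Σ n : ℕ, (Fin n → B) → B)) (h𝓕 : #𝓕 < κ) :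
    ∃ seq : Ordinal → Set B, IsPathway E 𝓕 κ.ord seq := by
  have hκ0 : ℵ₀ ≤ κ := hunc.le
  have hlim : Order.IsSuccLimit κ.ord := Cardinal.isSuccLimit_ord hκ0
  obtain ⟨e⟩ : Nonempty (↥(Set.Iio κ.ord) ≃ B) := by
    apply Cardinal.lift_mk_eq'.mp
    rw [Ordinal.mk_Iio_ordinal, Cardinal.card_ord, ← hκB]
    simp
  set img : Ordinal → Set B := fun α => e '' {β : ↥(Set.Iio κ.ord) | (β : Ordinal) < α}
    with himg
  have himgmono : ∀ α β : Ordinal, α ≤ β → img α ⊆ img β := fun α β hle =>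
    Set.image_mono fun x hx => lt_of_lt_of_le hx hle
  refine ⟨fun α => {b | Cl 𝓕 (img α) b}, ?_, ?_, ?_, ?_, ?_⟩
  · exact fun α β hle _ b hb => Cl_mono (himgmono α β hle) hb
  · intro γ _ hγ
    ext b
    simp only [mem_iUnion, mem_setOf_eq]
    constructor
    · intro h
      have h' : Cl 𝓕 (⋃ α : Ordinal, ⋃ _ : α < γ, img α) b := by
        refine Cl_mono ?_ h
        rintro x ⟨β, hβ, rfl⟩
        simp only [mem_iUnion]
        exact ⟨Order.succ (β : Ordinal), hγ.succ_lt hβ,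
          ⟨β, show (β : Ordinal) < Order.succ (β : Ordinal) from Order.lt_succ _, rfl⟩⟩
      obtain ⟨α, hα, h''⟩ := Cl_iUnion img himgmono hγ h'
      exact ⟨α, hα, h''⟩
    · rintro ⟨α, hα, h⟩
      exact Cl_mono (himgmono α γ hα.le) h
  · ext b
    simp only [mem_iUnion, mem_univ, iff_true, mem_setOf_eq]
    refine ⟨Order.succ ((e.symm b : ↥(Set.Iio κ.ord)) : Ordinal),
      hlim.succ_lt (e.symm b).2, Cl.base ⟨e.symm b,
        show ((e.symm b : ↥(Set.Iio κ.ord)) : Ordinal) < _ from Order.lt_succ _,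
        e.apply_symm_apply b⟩⟩
  · intro α hα
    by_contra hcon
    push_neg at hcon
    have hdom : ∀ x : A, ∃ y ∈ {b | Cl 𝓕 (img α) b}, E x y := by
      intro x
      obtain ⟨y, hy, hxy⟩ := hcon x
      exact ⟨y, hy, hxy⟩
    have hle : κ ≤ #{b | Cl 𝓕 (img α) b} := by
      rw [hκx]
      exact csInf_le' ⟨{b | Cl 𝓕 (img α) b}, rfl, hdom⟩
    have himgcard : #(img α) < κ := by
      have h1 : Cardinal.lift.{u + 1} #(img α) ≤
          Cardinal.lift.{u} #({β : ↥(Set.Iio κ.ord) | (β : Ordinal) < α}) :=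
        Cardinal.mk_image_le_lift
      have h2 : #({β : ↥(Set.Iio κ.ord) | (β : Ordinal) < α}) ≤ #(Set.Iio α) :=
        Cardinal.mk_le_of_injective (f := fun β => (⟨(β : ↥(Set.Iio κ.ord)), β.2⟩ : Set.Iio α))
          (fun a b hab => by
            apply Subtype.ext; apply Subtype.ext
            exact congrArg (fun x => ((x : ↥(Set.Iio α)) : Ordinal)) hab)
      rw [Ordinal.mk_Iio_ordinal] at h2
      have h3 : Cardinal.lift.{u + 1} #(img α) ≤ Cardinal.lift.{u + 1} α.card := by
        refine h1.trans ?_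
        calc Cardinal.lift.{u} #({β : ↥(Set.Iio κ.ord) | (β : Ordinal) < α})
            ≤ Cardinal.lift.{u} (Cardinal.lift.{u + 1} α.card) := Cardinal.lift_le.mpr h2
          _ = Cardinal.lift.{u + 1} α.card := by simp
      have h4 : #(img α) ≤ α.card := Cardinal.lift_le.mp h3
      exact lt_of_le_of_lt h4 (Cardinal.lt_ord.mp hα)
    have hsmall : #{b | Cl 𝓕 (img α) b} < κ := by
      refine lt_of_le_of_lt (Cl_card 𝓕 (img α)) ?_
      exact max_lt (Cardinal.add_lt_of_lt hκ0 himgcard h𝓕) hunc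
    exact absurd hle (not_le.mpr hsmall)
  · intro α _ F hF v hv
    exact Cl.app hF v hv
end

section
/- Let A, B be sets, E ⊆ A × B a relation, ℱ a family of finitary operations on B, and κ a cardinal. If there exists a ⟨⟨A,B,E⟩, ℱ, κ⟩-pathway, then there exists a set X ⊆ A with |X| ≤ κ such that for every b ∈ B there is x ∈ X with ¬(x E b). Consequently, the dual cardinal characteristic 𝔵* (the evaluation of ⟨B, A, ¬E⁻¹⟩) is at most κ. -/
open Cardinal Set

/-- a `⟨⟨A,B,E⟩, 𝓕, κ⟩`-pathway yields a set `X ⊆ A` of size at most `κ`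
such that every `b ∈ B` fails to be `E`-dominated by some member of `X`; consequently the
dual cardinal characteristic, the evaluation of `⟨B, A, ¬E⁻¹⟩`, is at most `κ`. -/
theorem stmt3 {A B : Type u} (E : A → B → Prop)
    (𝓕 : Set (Σ n : ℕ, (Fin n → B) → B)) (κ : Cardinal.{u})
    (seq : Ordinal → Set B) (hpath : IsPathway E 𝓕 κ.ord seq) :
    (∃ X : Set A, #X ≤ κ ∧ ∀ b : B, ∃ x ∈ X, ¬ E x b) ∧
      evalTriple (fun (b : B) (a : A) => ¬ E a b) ≤ κ := by
  choose x hx using hpath.avoid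
  set f : {α : Ordinal.{u} // α < κ.ord} → A := fun p => x p.1 p.2 with hf
  set X : Set A := Set.range f with hXdef
  have hX : ∀ b : B, ∃ a ∈ X, ¬ E a b := by
    intro b
    have hb : b ∈ ⋃ α : Ordinal, ⋃ _ : α < κ.ord, seq α := by
      rw [hpath.total]; exact mem_univ b
    simp only [mem_iUnion] at hb
    obtain ⟨α, hα, hbα⟩ := hb
    exact ⟨f ⟨α, hα⟩, ⟨⟨α, hα⟩, rfl⟩, hx α hα b hbα⟩
  have hcard : #X ≤ κ := by
    have h1 := Cardinal.mk_range_le_lift (f := f)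
    have h2 : #{α : Ordinal.{u} // α < κ.ord} = Cardinal.lift.{u+1} κ := by
      have := Ordinal.mk_Iio_ordinal κ.ord
      simp only [Cardinal.card_ord] at this; exact this
    have h3 : Cardinal.lift.{u+1} #X ≤ Cardinal.lift.{u+1} κ := by
      simpa [h2, Cardinal.lift_lift] using h1
    exact Cardinal.lift_le.mp h3
  refine ⟨⟨X, hcard, hX⟩, ?_⟩
  exact le_trans (csInf_le (OrderBot.bddBelow _) ⟨X, rfl, hX⟩) hcard
end

section
/- Let A, B be sets, E ⊆ A × B a relation, ℱ a family of finitary operations on B, and let δ be a limit ordinal. If there exists a ⟨⟨A,B,E⟩, ℱ, δ⟩-pathway, then there exists a ⟨⟨A,B,E⟩, ℱ, cf(δ)⟩-pathway, where cf(δ) is the cofinality of δ. -/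
open Cardinal Set

/-- if `δ` is a limit ordinal and there is a `⟨⟨A,B,E⟩, 𝓕, δ⟩`-pathway,
then there is a `⟨⟨A,B,E⟩, 𝓕, cf(δ)⟩`-pathway. -/
theorem stmt4 {A B : Type u} (E : A → B → Prop)
    (𝓕 : Set (Σ n : ℕ, (Fin n → B) → B)) (δ : Ordinal.{u}) (hδ : Order.IsSuccLimit δ)
    (seq : Ordinal → Set B) (hpath : IsPathway E 𝓕 δ seq) :
    ∃ seq' : Ordinal → Set B, IsPathway E 𝓕 δ.cof.ord seq' := by
  obtain ⟨f, hf⟩ := Ordinal.exists_fundamental_sequence δ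
  have hcoflim : Order.IsSuccLimit (δ.cof.ord) :=
    Cardinal.isSuccLimit_ord (Ordinal.aleph0_le_cof.2 hδ)
  -- a total version of f
  set g : Ordinal → Ordinal := fun ξ => if h : ξ < δ.cof.ord then f ξ h else 0 with hg
  have hgδ : ∀ ξ < δ.cof.ord, g ξ < δ := by
    intro ξ hξ
    simp only [hg, dif_pos hξ]
    exact hf.lt hξ
  have hgmono : ∀ ξ ζ : Ordinal, ξ < ζ → ζ < δ.cof.ord → g ξ < g ζ := by
    intro ξ ζ h hζ
    have hξ : ξ < δ.cof.ord := h.trans hζ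
    simp only [hg, dif_pos hξ, dif_pos hζ]
    exact hf.strict_mono _ _ h
  have hgcof : ∀ β < δ, ∃ ξ < δ.cof.ord, β ≤ g ξ := by
    intro β hβ
    rw [← hf.blsub_eq, Ordinal.lt_blsub_iff] at hβ
    obtain ⟨ξ, hξ, hle⟩ := hβ
    exact ⟨ξ, hξ, by simpa [hg, dif_pos hξ] using hle⟩
  set seq' : Ordinal → Set B :=
    fun α => seq 0 ∪ ⋃ ξ : Ordinal, ⋃ _ : ξ < α, seq (g ξ) with hseq'
  -- key: seq' α ⊆ seq (g α) for α < δ.cof.ord, and seq (g ξ) ⊆ seq' α whenever ξ < α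
  have hsub : ∀ α < δ.cof.ord, seq' α ⊆ seq (g α) := by
    intro α hα x hx
    rcases hx with hx | hx
    · exact hpath.mono 0 (g α) zero_le (hgδ α hα) hx
    · simp only [mem_iUnion] at hx
      obtain ⟨ξ, hξ, hx⟩ := hx
      exact hpath.mono (g ξ) (g α) (hgmono ξ α hξ hα).le (hgδ α hα) hx
  have hsup : ∀ α ξ : Ordinal, ξ < α → seq (g ξ) ⊆ seq' α := by
    intro α ξ hξ x hx
    exact Or.inr (mem_iUnion.2 ⟨ξ, mem_iUnion.2 ⟨hξ, hx⟩⟩)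
  refine ⟨seq', ?_, ?_, ?_, ?_, ?_⟩
  · -- mono
    intro α β hab _ x hx
    rcases hx with hx | hx
    · exact Or.inl hx
    · simp only [mem_iUnion] at hx
      obtain ⟨ξ, hξ, hx⟩ := hx
      exact hsup β ξ (hξ.trans_le hab) hx
  · -- cont
    intro γ _ hγ
    ext x
    simp only [hseq', mem_iUnion, mem_union]
    constructor
    · rintro (hx | ⟨ξ, hξ, hx⟩)
      · exact ⟨0, hγ.pos, Or.inl hx⟩
      · exact ⟨ξ + 1, hγ.succ_lt hξ, Or.inr ⟨ξ, lt_add_one ξ, hx⟩⟩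
    · rintro ⟨α, hα, hx | ⟨ξ, hξ, hx⟩⟩
      · exact Or.inl hx
      · exact Or.inr ⟨ξ, hξ.trans hα, hx⟩
  · -- total
    rw [eq_univ_iff_forall]
    intro x
    have : x ∈ ⋃ α : Ordinal, ⋃ _ : α < δ, seq α := hpath.total ▸ mem_univ x
    simp only [mem_iUnion] at this ⊢
    obtain ⟨β, hβ, hx⟩ := this
    obtain ⟨ξ, hξ, hle⟩ := hgcof β hβ
    exact ⟨ξ + 1, hcoflim.succ_lt hξ,
      hsup (ξ + 1) ξ (lt_add_one ξ) (hpath.mono β (g ξ) hle (hgδ ξ hξ) hx)⟩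
  · -- avoid
    intro α hα
    obtain ⟨x, hx⟩ := hpath.avoid (g α) (hgδ α hα)
    exact ⟨x, fun y hy => hx y (hsub α hα hy)⟩
  · -- closedF
    intro α hα F hF v hv
    rcases eq_or_ne α 0 with rfl | hα0
    · -- seq' 0 = seq 0
      have h0 : ∀ i, v i ∈ seq 0 := by
        intro i
        rcases hv i with hx | hx
        · exact hx
        · simp only [mem_iUnion] at hx
          obtain ⟨ξ, hξ, _⟩ := hx
          exact absurd hξ (not_lt_zero (a := ξ))
      exact Or.inl (hpath.closedF 0 hδ.pos F hF v h0)
    · have hα0' : 0 < α := pos_iff_ne_zero.2 hα0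
      -- for each i, choose ξ i < α with v i ∈ seq (g (ξ i))
      have hch : ∀ i, ∃ ξ < α, v i ∈ seq (g ξ) := by
        intro i
        rcases hv i with hx | hx
        · exact ⟨0, hα0', hpath.mono 0 (g 0) zero_le
            (hgδ 0 (hα0'.trans hα)) hx⟩
        · simp only [mem_iUnion] at hx
          obtain ⟨ξ, hξ, hx⟩ := hx
          exact ⟨ξ, hξ, hx⟩
      choose ξ hξlt hξmem using hch
      set ζ : Ordinal := Finset.univ.sup ξ with hζ
      have hζα : ζ < α := (Finset.sup_lt_iff hα0').2 fun i _ => hξlt i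
      have hζδ.cof.ord : ζ < δ.cof.ord := hζα.trans hα
      have hvζ : ∀ i, v i ∈ seq (g ζ) := by
        intro i
        refine hpath.mono (g (ξ i)) (g ζ) ?_ (hgδ ζ hζδ.cof.ord) (hξmem i)
        rcases eq_or_lt_of_le (Finset.le_sup (f := ξ) (Finset.mem_univ i)) with h | h
        · exact le_of_eq (by rw [h])
        · exact (hgmono _ _ h hζδ.cof.ord).le
      exact hsup α ζ hζα (hpath.closedF (g ζ) (hgδ ζ hζδ.cof.ord) F hF v hvζ)
end

section
/- Let B be a set, E ⊆ B × B a relation, ℱ a family of finitary operations on B, and κ a regular cardinal. If there exists a ⟨⟨B,B,E⟩, ℱ, κ⟩-pathway, then there exists a ⟨⟨B,B,E⟩, ℱ, κ⟩-pathway ⟨B_α : α < κ⟩ additionally satisfying: for every α < κ there exists x ∈ B_{α+1} such that ¬(x E y) for all y ∈ B_α. -/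
open Cardinal Set

/-- when `A = B`, a `⟨⟨B,B,E⟩, 𝓕, κ⟩`-pathway (`κ` regular) can be improved
to one where the witness to non-domination of `seq α` can be found inside `seq (α+1)`. -/
theorem stmt5 {B : Type u} (E : B → B → Prop)
    (𝓕 : Set (Σ n : ℕ, (Fin n → B) → B)) (κ : Cardinal.{u}) (hκ : κ.IsRegular)
    (seq : Ordinal → Set B) (hpath : IsPathway E 𝓕 κ.ord seq) :
    ∃ seq' : Ordinal → Set B, IsPathway E 𝓕 κ.ord seq' ∧
      ∀ α : Ordinal, α < κ.ord →
        ∃ x ∈ seq' (α + 1), ∀ y ∈ seq' α, ¬ E x y := by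
  classical
  have hlim : Order.IsSuccLimit κ.ord := Cardinal.isSuccLimit_ord hκ.aleph0_le
  -- choose witnesses and the stage containing them
  have hx : ∀ δ : Ordinal, δ < κ.ord →
      ∃ x : B, ∃ β : Ordinal, β < κ.ord ∧ x ∈ seq β ∧ ∀ y ∈ seq δ, ¬ E x y := by
    intro δ hδ
    obtain ⟨x, hxav⟩ := hpath.avoid δ hδ
    have hx : x ∈ (⋃ α : Ordinal, ⋃ _ : α < κ.ord, seq α) := hpath.total ▸ mem_univ x
    simp only [mem_iUnion] at hx
    obtain ⟨β, hβ, hxβ⟩ := hx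
    exact ⟨x, β, hβ, hxβ, hxav⟩
  have hB : Nonempty B := (hpath.avoid 0 hlim.pos).elim fun x _ => ⟨x⟩
  choose! x G hGlt hmem hav using hx
  -- the reindexing function
  let h : Ordinal → Ordinal := fun α =>
    Ordinal.limitRecOn α 0 (fun _ ih => max (ih + 1) (G ih))
      (fun o _ ih => Ordinal.bsup.{u,u} o ih)
  have h0 : h 0 = 0 := Ordinal.limitRecOn_zero ..
  have hsucc : ∀ α, h (α + 1) = max (h α + 1) (G (h α)) := fun α => by
    rw [← Order.succ_eq_add_one]
    exact Ordinal.limitRecOn_succ ..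
  have hlimit : ∀ γ : Ordinal, Order.IsSuccLimit γ → h γ = Ordinal.bsup.{u,u} γ (fun β _ => h β) :=
    fun γ hγ => Ordinal.limitRecOn_limit _ _ _ _ hγ
  have hnorm : Order.IsNormal h := by
    refine Order.IsNormal.of_succ_lt ?_ ?_
    · intro o
      rw [Order.succ_eq_add_one, hsucc]
      exact lt_of_lt_of_le (Order.lt_succ _) (le_max_left _ _)
    · intro o ho
      refine ⟨?_, fun a ha => ?_⟩
      · rintro _ ⟨b, hb, rfl⟩
        rw [hlimit o ho]
        exact Ordinal.le_bsup _ b hb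
      · rw [hlimit o ho]
        exact Ordinal.bsup_le_iff.2 fun b hb => ha ⟨b, hb, rfl⟩
  have hmono : Monotone h := hnorm.monotone
  have hle : ∀ α, α ≤ h α := fun α => hnorm.strictMono.le_apply
  -- h stays below κ.ord
  have hbound : ∀ α, α < κ.ord → h α < κ.ord := by
    intro α
    induction α using Ordinal.limitRecOn with
    | zero => intro _; rw [h0]; exact hlim.pos
    | add_one β ih =>
      intro hβ1
      have hβ : β < κ.ord := lt_of_le_of_lt (le_of_lt (Order.lt_succ β)) hβ1
      rw [hsucc]
      exact max_lt (hlim.add_one_lt (ih hβ)) (hGlt (h β) (ih hβ))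
    | limit γ hγ ih =>
      intro hγκ
      rw [hlimit γ hγ]
      refine Cardinal.bsup_lt_ord_of_isRegular hκ ?_ ?_
      · rwa [← Cardinal.lt_ord]
      · intro i hi
        exact ih i hi (hi.trans hγκ)
  -- the improved pathway
  refine ⟨fun α => seq (h α), ⟨?_, ?_, ?_, ?_, ?_⟩, ?_⟩
  · intro α β hαβ hβ
    exact hpath.mono _ _ (hmono hαβ) (hbound β hβ)
  · intro γ hγκ hγ
    have hhγ : Order.IsSuccLimit (h γ) := hnorm.map_isSuccLimit hγ
    rw [hpath.cont (h γ) (hbound γ hγκ) hhγ]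
    apply Set.Subset.antisymm
    · intro z hz
      simp only [mem_iUnion] at hz ⊢
      obtain ⟨δ, hδ, hzδ⟩ := hz
      rw [hlimit γ hγ] at hδ
      obtain ⟨β, hβγ, hδβ⟩ := (Ordinal.lt_bsup _).mp hδ
      exact ⟨β, hβγ, hpath.mono _ _ hδβ.le (hbound β (hβγ.trans hγκ)) hzδ⟩
    · intro z hz
      simp only [mem_iUnion] at hz ⊢
      obtain ⟨β, hβγ, hzβ⟩ := hz
      exact ⟨h β, hnorm.strictMono hβγ, hzβ⟩
  · apply Set.Subset.antisymm (subset_univ _)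
    rw [← hpath.total]
    intro z hz
    simp only [mem_iUnion] at hz ⊢
    obtain ⟨α, hα, hzα⟩ := hz
    exact ⟨α, hα, hpath.mono _ _ (hle α) (hbound α hα) hzα⟩
  · intro α hα
    exact hpath.avoid (h α) (hbound α hα)
  · intro α hα F hF
    exact hpath.closedF (h α) (hbound α hα) F hF
  · -- the extra condition
    intro α hα
    have hhα : h α < κ.ord := hbound α hα
    have hα1 : α + 1 < κ.ord := hlim.add_one_lt hα
    refine ⟨x (h α), ?_, hav (h α) hhα⟩
    have : G (h α) ≤ h (α + 1) := by rw [hsucc]; exact le_max_right _ _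
    exact hpath.mono _ _ this (hbound _ hα1) (hmem (h α) hhα)
end

section
/- Let X⃗ = ⟨Xₙ : n < ω⟩ be a decreasing sequence of subsets of ω with ⋂ₙ Xₙ = ∅, and let f : ω → ω. Then ps(X⃗,f) = ⋃ₙ (Xₙ ∩ [0, f(n))) satisfies: (a) ps(X⃗,f) ⊆ X₀; (b) ps(X⃗,f) ∖ Xₙ is finite for every n < ω (i.e. ps(X⃗,f) is a pseudointersection of X⃗); and (c) if additionally each Xₙ is infinite and f ≰* f_{X⃗}, then ps(X⃗,f) is infinite. -/
open Set

/-- The pseudointersection of the sequence `X` with growth controlled by `f`: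
`ps(X⃗, f) = ⋃ₙ (Xₙ ∩ [0, f n))`. -/
def psInt (X : ℕ → Set ℕ) (f : ℕ → ℕ) : Set ℕ :=
  ⋃ n, X n ∩ Set.Iio (f n)

/-- The "fast-enough-growing function" of a sequence of subsets of `ℕ`:
`f_{X⃗}(0) = min X₀ + 1`, `f_{X⃗}(n+1) = min {k : k > f_{X⃗}(n) ∧ k ∈ X_{n+1}} + 1`. -/
noncomputable def fseq (X : ℕ → Set ℕ) : ℕ → ℕ
  | 0 => sInf (X 0) + 1
  | n + 1 => sInf {k | fseq X n < k ∧ k ∈ X (n + 1)} + 1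

lemma fseq_pred_mem (X : ℕ → Set ℕ) (hinf : ∀ n, (X n).Infinite) (n : ℕ) :
    fseq X n - 1 ∈ X n := by
  cases n with
  | zero =>
      simp only [fseq, Nat.add_sub_cancel]
      exact Nat.sInf_mem (hinf 0).nonempty
  | succ n =>
      simp only [fseq, Nat.add_sub_cancel]
      obtain ⟨k, hk, hgt⟩ := (hinf (n + 1)).exists_gt (fseq X n)
      exact (Nat.sInf_mem (⟨k, hgt, hk⟩ : {k | fseq X n < k ∧ k ∈ X (n + 1)}.Nonempty)).2

lemma fseq_strictMono (X : ℕ → Set ℕ) (hinf : ∀ n, (X n).Infinite) :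
    StrictMono (fseq X) := by
  apply strictMono_nat_of_lt_succ
  intro n
  obtain ⟨k, hk, hgt⟩ := (hinf (n + 1)).exists_gt (fseq X n)
  have h := (Nat.sInf_mem (⟨k, hgt, hk⟩ : {k | fseq X n < k ∧ k ∈ X (n + 1)}.Nonempty)).1
  calc fseq X n < sInf {k | fseq X n < k ∧ k ∈ X (n + 1)} := h
    _ < _ + 1 := Nat.lt_succ_self _
    _ = fseq X (n + 1) := by rw [fseq]

/-- for a decreasing sequence `X⃗` of subsets of `ω` with empty intersection
and any `f : ω → ω`: (a) `ps(X⃗,f) ⊆ X₀`; (b) `ps(X⃗,f) ∖ Xₙ` is finite for every `n`;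
and (c) if moreover every `Xₙ` is infinite and `f ≰* f_{X⃗}`, then `ps(X⃗,f)` is infinite. -/
theorem stmt6 (X : ℕ → Set ℕ) (hdec : Antitone X) (hempty : (⋂ n, X n) = ∅)
    (f : ℕ → ℕ) :
    psInt X f ⊆ X 0 ∧
    (∀ n, (psInt X f \ X n).Finite) ∧
    ((∀ n, (X n).Infinite) → ¬ (∀ᶠ n in Filter.atTop, f n ≤ fseq X n) →
      (psInt X f).Infinite) := by
  refine ⟨?_, ?_, ?_⟩
  · intro x hx
    obtain ⟨n, hn, _⟩ := Set.mem_iUnion.1 hx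
    exact hdec (Nat.zero_le n) hn
  · intro n
    apply Set.Finite.subset (Set.Finite.biUnion (Set.finite_Iio n)
      (fun m _ => Set.finite_Iio (f m)))
    rintro x ⟨hx, hxn⟩
    obtain ⟨m, hm, hlt⟩ := Set.mem_iUnion.1 hx
    have hmn : m < n := by
      by_contra h
      exact hxn (hdec (Nat.le_of_not_lt h) hm)
    exact Set.mem_biUnion hmn hlt
  · intro hinf hnot
    apply Set.infinite_of_forall_exists_gt
    intro a
    have hfreq : ∀ m, ∃ n, m ≤ n ∧ fseq X n < f n := by
      simpa [Filter.not_eventually, not_le] using hnot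
    obtain ⟨n, hna, hlt⟩ := hfreq (a + 2)
    refine ⟨fseq X n - 1, ?_, ?_⟩
    · exact Set.mem_iUnion.2 ⟨n, fseq_pred_mem X hinf n,
        lt_of_le_of_lt (Nat.sub_le _ _) hlt⟩
    · have hn : n ≤ fseq X n := (fseq_strictMono X hinf).le_apply
      omega
end

section
/- Fix functions cd : ω^ω → 𝔓(ω)^{↓ω} and dcd : 𝔓(ω)^{↓ω} → ω^ω with cd ∘ dcd = id, where 𝔓(ω)^{↓ω} is the set of decreasing sequences of subsets of ω with empty intersection, and let eₙ(⟨X_m : m<ω⟩) = Xₙ. Define the unary operations on ω^ω: F_c(h) = dcd(⟨(ω ∖ e₀(cd(h))) ∖ n : n < ω⟩), F_f(h) = f_{cd(h)}, F_s(h) = dcd(⟨e₀(cd(h)) ∖ n : n < ω⟩); and the binary operations: F_p(g,h) = dcd(⟨ps(cd(g), h) ∖ n : n < ω⟩) and F_i(g,h) = dcd(⟨eₙ(cd(g)) ∩ eₙ(cd(h)) : n < ω⟩). Let ℱ_{P-pt} = {F_c, F_f, F_s, F_i, F_p}. If κ is a regular cardinal and there exists a ⟨𝔡, ℱ_{P-pt},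 κ⟩-pathway, then there exists a P-point. -/
open Cardinal Set

/-- The eventual domination relation `f ≤* g` on `ω^ω`. -/
def evDomLE (f g : ℕ → ℕ) : Prop := ∀ᶠ n in Filter.atTop, f n ≤ g n

/-- The fast-enough-growing function `f_{X⃗}`: constantly `0` if some `Xₙ` is finite,
and given by the recursion `fseq` otherwise. -/
noncomputable def fgrow (X : ℕ → Set ℕ) : ℕ → ℕ := by
  classical exact if ∀ n, (X n).Infinite then fseq X else fun _ => 0

section PPointOps

variable (cd : (ℕ → ℕ) → (ℕ → Set ℕ)) (dcd : (ℕ → Set ℕ) → (ℕ → ℕ))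

/-- `F_c(h) = dcd ⟨(ω ∖ e₀(cd h)) ∖ n : n < ω⟩`. -/
noncomputable def Fc (h : ℕ → ℕ) : ℕ → ℕ :=
  dcd (fun n => (cd h 0)ᶜ \ Set.Iio n)

/-- `F_f(h) = f_{cd h}`. -/
noncomputable def Ff (h : ℕ → ℕ) : ℕ → ℕ := fgrow (cd h)

/-- `F_s(h) = dcd ⟨e₀(cd h) ∖ n : n < ω⟩`. -/
noncomputable def Fs (h : ℕ → ℕ) : ℕ → ℕ :=
  dcd (fun n => cd h 0 \ Set.Iio n)

/-- `F_p(g,h) = dcd ⟨ps(cd g, h) ∖ n : n < ω⟩`. -/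
noncomputable def Fp (g h : ℕ → ℕ) : ℕ → ℕ :=
  dcd (fun n => psInt (cd g) h \ Set.Iio n)

/-- `F_i(g,h) = dcd ⟨eₙ(cd g) ∩ eₙ(cd h) : n < ω⟩`. -/
noncomputable def Fi (g h : ℕ → ℕ) : ℕ → ℕ :=
  dcd (fun n => cd g n ∩ cd h n)

/-- The family `ℱ_{P-pt} = {F_c, F_f, F_s, F_i, F_p}` as finitary operations on `ω^ω`. -/
noncomputable def PPtOps : Set (Σ n : ℕ, (Fin n → (ℕ → ℕ)) → (ℕ → ℕ)) :=
  {⟨1, fun v => Fc cd dcd (v 0)⟩, ⟨1, fun v => Ff cd (v 0)⟩,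
   ⟨1, fun v => Fs cd dcd (v 0)⟩, ⟨2, fun v => Fi cd dcd (v 0) (v 1)⟩,
   ⟨2, fun v => Fp cd dcd (v 0) (v 1)⟩}

end PPointOps
namespace Stmt8Aux

open Filter Set

/-- The tail sequence of a set. -/
def tsq (A : Set ℕ) : ℕ → Set ℕ := fun n => A \ Set.Iio n

lemma tsq_anti (A : Set ℕ) : Antitone (tsq A) := by
  intro m n hmn x hx
  exact ⟨hx.1, fun hc => hx.2 (lt_of_lt_of_le hc hmn)⟩

lemma tsq_iInter (A : Set ℕ) : (⋂ n, tsq A n) = ∅ := by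
  ext x
  simp only [Set.mem_iInter, Set.mem_empty_iff_false, iff_false, not_forall]
  exact ⟨x + 1, fun hx => hx.2 (Nat.lt_succ_self x)⟩

lemma tsq_zero (A : Set ℕ) : tsq A 0 = A := by
  ext x; simp [tsq]

lemma psInt_mono {X Y : ℕ → Set ℕ} {f : ℕ → ℕ} (h : ∀ n, X n ⊆ Y n) :
    psInt X f ⊆ psInt Y f := by
  intro x hx
  obtain ⟨n, hn⟩ := Set.mem_iUnion.1 hx
  exact Set.mem_iUnion.2 ⟨n, h n hn.1, hn.2⟩

lemma psInt_subset_zero {X : ℕ → Set ℕ} {f : ℕ → ℕ} (hX : Antitone X) :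
    psInt X f ⊆ X 0 := by
  intro x hx
  obtain ⟨n, hn⟩ := Set.mem_iUnion.1 hx
  exact hX (Nat.zero_le n) hn.1

lemma psInt_diff_finite {X : ℕ → Set ℕ} {f : ℕ → ℕ} (hX : Antitone X) (m : ℕ) :
    (psInt X f \ X m).Finite := by
  have hsub : psInt X f \ X m ⊆ ⋃ n ∈ Finset.range m, Set.Iio (f n) := by
    rintro x ⟨hx, hxm⟩
    obtain ⟨n, hn⟩ := Set.mem_iUnion.1 hx
    have hnm : n < m := by
      by_contra hge
      exact hxm (hX (Nat.le_of_not_lt hge) hn.1)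
    exact Set.mem_biUnion (Finset.mem_range.2 hnm) hn.2
  exact Set.Finite.subset (Set.Finite.biUnion (Finset.range m).finite_toSet
    (fun n _ => Set.finite_Iio (f n))) hsub

lemma fseq_succ_spec {X : ℕ → Set ℕ} (hinf : ∀ n, (X n).Infinite) (n : ℕ) :
    sInf {k | fseq X n < k ∧ k ∈ X (n + 1)} ∈ X (n + 1) ∧
      fseq X n < sInf {k | fseq X n < k ∧ k ∈ X (n + 1)} := by
  have hne : {k | fseq X n < k ∧ k ∈ X (n + 1)}.Nonempty := by
    obtain ⟨b, hb, hlt⟩ := (hinf (n + 1)).exists_gt (fseq X n)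
    exact ⟨b, hlt, hb⟩
  have := Nat.sInf_mem hne
  exact ⟨this.2, this.1⟩

lemma fseq_lt_succ {X : ℕ → Set ℕ} (hinf : ∀ n, (X n).Infinite) (n : ℕ) :
    fseq X n < fseq X (n + 1) := by
  have h := fseq_succ_spec hinf n
  calc fseq X n < sInf {k | fseq X n < k ∧ k ∈ X (n + 1)} := h.2
    _ < _ + 1 := Nat.lt_succ_self _
    _ = fseq X (n + 1) := by rw [fseq]

lemma lt_fseq {X : ℕ → Set ℕ} (hinf : ∀ n, (X n).Infinite) : ∀ n, n < fseq X n := by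
  intro n
  induction n with
  | zero => rw [fseq]; exact Nat.succ_pos _
  | succ m ih =>
    have := fseq_lt_succ hinf m
    omega

lemma psInt_infinite {X : ℕ → Set ℕ} {f : ℕ → ℕ} (hinf : ∀ n, (X n).Infinite)
    (hf : ∃ᶠ n in Filter.atTop, fgrow X n < f n) : (psInt X f).Infinite := by
  apply Set.infinite_of_forall_exists_gt
  intro a
  obtain ⟨n, hge, hlt⟩ := (Filter.eventually_ge_atTop (a + 2)).and_frequently hf |>.exists
  have hgrow : fgrow X = fseq X := by rw [fgrow, if_pos hinf]
  rw [hgrow] at hlt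
  obtain ⟨m, rfl⟩ : ∃ m, n = m + 1 := ⟨n - 1, by omega⟩
  set c := sInf {k | fseq X m < k ∧ k ∈ X (m + 1)} with hc
  obtain ⟨hcmem, hcgt⟩ := fseq_succ_spec hinf m
  have hcf : c < fseq X (m + 1) := by rw [fseq]; exact Nat.lt_succ_self _
  refine ⟨c, ?_, ?_⟩
  · exact Set.mem_iUnion.2 ⟨m + 1, hcmem, lt_trans hcf hlt⟩
  · have := lt_fseq hinf m
    omega

end Stmt8Aux
namespace Stmt8Aux

open Filter Set

section Coding

variable {cd : (ℕ → ℕ) → (ℕ → Set ℕ)} {dcd : (ℕ → Set ℕ) → (ℕ → ℕ)}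
  {κ : Cardinal} {seq : Ordinal → Set (ℕ → ℕ)}

/-- `X` is coded at level `μ`. -/
def CodedSeq (cd : (ℕ → ℕ) → (ℕ → Set ℕ)) (seq : Ordinal → Set (ℕ → ℕ))
    (μ : Ordinal) (X : ℕ → Set ℕ) : Prop := ∃ h ∈ seq μ, cd h = X

lemma mem_Fc : (⟨1, fun v => Fc cd dcd (v 0)⟩ : Σ n : ℕ, (Fin n → (ℕ → ℕ)) → (ℕ → ℕ)) ∈
    PPtOps cd dcd := Set.mem_insert _ _

lemma mem_Ff : (⟨1, fun v => Ff cd (v 0)⟩ : Σ n : ℕ, (Fin n → (ℕ → ℕ)) → (ℕ → ℕ)) ∈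
    PPtOps cd dcd := Set.mem_insert_of_mem _ (Set.mem_insert _ _)

lemma mem_Fs : (⟨1, fun v => Fs cd dcd (v 0)⟩ : Σ n : ℕ, (Fin n → (ℕ → ℕ)) → (ℕ → ℕ)) ∈
    PPtOps cd dcd :=
  Set.mem_insert_of_mem _ (Set.mem_insert_of_mem _ (Set.mem_insert _ _))

lemma mem_Fi : (⟨2, fun v => Fi cd dcd (v 0) (v 1)⟩ : Σ n : ℕ, (Fin n → (ℕ → ℕ)) → (ℕ → ℕ)) ∈
    PPtOps cd dcd :=
  Set.mem_insert_of_mem _ (Set.mem_insert_of_mem _ (Set.mem_insert_of_mem _ (Set.mem_insert _ _)))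

lemma mem_Fp : (⟨2, fun v => Fp cd dcd (v 0) (v 1)⟩ : Σ n : ℕ, (Fin n → (ℕ → ℕ)) → (ℕ → ℕ)) ∈
    PPtOps cd dcd :=
  Set.mem_insert_of_mem _ (Set.mem_insert_of_mem _ (Set.mem_insert_of_mem _
    (Set.mem_insert_of_mem _ rfl)))

variable {dcd : (ℕ → Set ℕ) → (ℕ → ℕ)}

lemma codedSeq_anti (hcd : ∀ f, Antitone (cd f) ∧ (⋂ n, cd f n) = ∅)
    {μ : Ordinal} {X : ℕ → Set ℕ} (hX : CodedSeq cd seq μ X) : Antitone X := by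
  obtain ⟨h, _, rfl⟩ := hX
  exact (hcd h).1

lemma codedSeq_mono (hpath : IsPathway evDomLE (PPtOps cd dcd) κ.ord seq)
    {μ ν : Ordinal} {X : ℕ → Set ℕ} (hμν : μ ≤ ν) (hν : ν < κ.ord)
    (hX : CodedSeq cd seq μ X) : CodedSeq cd seq ν X := by
  obtain ⟨h, hh, rfl⟩ := hX
  exact ⟨h, hpath.mono μ ν hμν hν hh, rfl⟩

lemma mem_level (hpath : IsPathway evDomLE (PPtOps cd dcd) κ.ord seq)
    (x : ℕ → ℕ) : ∃ ν < κ.ord, x ∈ seq ν := by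
  have hx : x ∈ (⋃ α : Ordinal, ⋃ _ : α < κ.ord, seq α) := by
    rw [hpath.total]; trivial
  simpa using hx

lemma coded_tsq_zero (hpath : IsPathway evDomLE (PPtOps cd dcd) κ.ord seq) (hid : ∀ X : ℕ → Set ℕ, Antitone X → (⋂ n, X n) = ∅ → cd (dcd X) = X)
    {μ : Ordinal} (hμ : μ < κ.ord) {X : ℕ → Set ℕ}
    (hX : CodedSeq cd seq μ X) : CodedSeq cd seq μ (tsq (X 0)) := by
  obtain ⟨h, hh, rfl⟩ := hX
  refine ⟨Fs cd dcd h, ?_, ?_⟩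
  · exact hpath.closedF μ hμ _ mem_Fs (fun _ => h) (fun _ => hh)
  · exact hid _ (tsq_anti _) (tsq_iInter _)

lemma coded_tsq_compl (hpath : IsPathway evDomLE (PPtOps cd dcd) κ.ord seq) (hid : ∀ X : ℕ → Set ℕ, Antitone X → (⋂ n, X n) = ∅ → cd (dcd X) = X)
    {μ : Ordinal} (hμ : μ < κ.ord) {X : ℕ → Set ℕ}
    (hX : CodedSeq cd seq μ X) : CodedSeq cd seq μ (tsq ((X 0)ᶜ)) := by
  obtain ⟨h, hh, rfl⟩ := hX
  refine ⟨Fc cd dcd h, ?_, ?_⟩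
  · exact hpath.closedF μ hμ _ mem_Fc (fun _ => h) (fun _ => hh)
  · exact hid _ (tsq_anti _) (tsq_iInter _)

lemma coded_inter (hpath : IsPathway evDomLE (PPtOps cd dcd) κ.ord seq) (hid : ∀ X : ℕ → Set ℕ, Antitone X → (⋂ n, X n) = ∅ → cd (dcd X) = X)
    (hcd : ∀ f, Antitone (cd f) ∧ (⋂ n, cd f n) = ∅)
    {μ : Ordinal} (hμ : μ < κ.ord) {X Y : ℕ → Set ℕ}
    (hX : CodedSeq cd seq μ X) (hY : CodedSeq cd seq μ Y) :
    CodedSeq cd seq μ (fun n => X n ∩ Y n) := by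
  obtain ⟨g, hg, rfl⟩ := hX
  obtain ⟨h, hh, rfl⟩ := hY
  refine ⟨Fi cd dcd g h, ?_, ?_⟩
  · have := hpath.closedF μ hμ _ mem_Fi ![g, h] (by
      intro i; fin_cases i <;> simpa)
    simpa using this
  · refine hid _ ?_ ?_
    · intro a b hab
      exact Set.inter_subset_inter ((hcd g).1 hab) ((hcd h).1 hab)
    · rw [Set.eq_empty_iff_forall_notMem]
      intro x hx
      have : x ∈ ⋂ n, cd g n := Set.mem_iInter.2 fun n => (Set.mem_iInter.1 hx n).1
      rw [(hcd g).2] at this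
      exact this

lemma fgrow_mem (hpath : IsPathway evDomLE (PPtOps cd dcd) κ.ord seq)
    {μ : Ordinal} (hμ : μ < κ.ord) {X : ℕ → Set ℕ}
    (hX : CodedSeq cd seq μ X) : fgrow X ∈ seq μ := by
  obtain ⟨h, hh, rfl⟩ := hX
  exact hpath.closedF μ hμ _ mem_Ff (fun _ => h) (fun _ => hh)

lemma coded_ps (hpath : IsPathway evDomLE (PPtOps cd dcd) κ.ord seq) (hid : ∀ X : ℕ → Set ℕ, Antitone X → (⋂ n, X n) = ∅ → cd (dcd X) = X)
    {μ : Ordinal} (hμ : μ < κ.ord) {X : ℕ → Set ℕ} {f : ℕ → ℕ}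
    (hX : CodedSeq cd seq μ X) (hf : f ∈ seq μ) :
    CodedSeq cd seq μ (tsq (psInt X f)) := by
  obtain ⟨g, hg, rfl⟩ := hX
  refine ⟨Fp cd dcd g f, ?_, ?_⟩
  · have := hpath.closedF μ hμ _ mem_Fp ![g, f] (by
      intro i; fin_cases i <;> simpa)
    simpa using this
  · exact hid _ (tsq_anti _) (tsq_iInter _)

end Coding

end Stmt8Aux
namespace Stmt8Aux

open Filter Set

section Step

variable {cd : (ℕ → ℕ) → (ℕ → Set ℕ)} {dcd : (ℕ → Set ℕ) → (ℕ → ℕ)}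
  {κ : Cardinal} {seq : Ordinal → Set (ℕ → ℕ)}

/-- The filter `F` has a base of coded sets at level `μ`. -/
def Based (cd : (ℕ → ℕ) → (ℕ → Set ℕ)) (seq : Ordinal → Set (ℕ → ℕ))
    (μ : Ordinal) (F : Filter ℕ) : Prop :=
  ∀ Z ∈ F, ∃ W ∈ F, CodedSeq cd seq μ (tsq W) ∧ (W \ Z).Finite

/-- Specification for the successor step of the construction. -/
def StepSpec (cd : (ℕ → ℕ) → (ℕ → Set ℕ)) (κ : Cardinal) (seq : Ordinal → Set (ℕ → ℕ))
    (α : Ordinal) (F F' : Filter ℕ) : Prop :=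
  F' ≤ F ∧ F'.NeBot ∧ (∃ μ' < κ.ord, Based cd seq μ' F') ∧
    (∀ h ∈ seq α, cd h 0 ∈ F' ∨ (cd h 0)ᶜ ∈ F') ∧
    (∀ h ∈ seq α, (∀ n, cd h n ∈ F) → ∃ Y ∈ F', ∀ n, (Y \ cd h n).Finite)

theorem succ_step
    (hcd : ∀ f, Antitone (cd f) ∧ (⋂ n, cd f n) = ∅)
    (hid : ∀ X : ℕ → Set ℕ, Antitone X → (⋂ n, X n) = ∅ → cd (dcd X) = X)
    (hpath : IsPathway evDomLE (PPtOps cd dcd) κ.ord seq)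
    {α μ : Ordinal} (hα : α < κ.ord) (hμ : μ < κ.ord)
    {F : Filter ℕ} (hne : F.NeBot) (hcof : F ≤ Filter.cofinite)
    (hB : Based cd seq μ F) : ∃ F', StepSpec cd κ seq α F F' := by
  classical
  set ρ := max μ α with hρdef
  have hρ : ρ < κ.ord := max_lt hμ hα
  obtain ⟨f, hf⟩ := hpath.avoid ρ hρ
  obtain ⟨ν, hν, hfν⟩ := mem_level hpath f
  set σ := max ρ ν with hσdef
  have hσ : σ < κ.ord := max_lt hρ hν
  have hfσ : f ∈ seq σ := hpath.mono ν σ (le_max_right _ _) hσ hfν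
  haveI : F.NeBot := hne
  set V : Ultrafilter ℕ := Ultrafilter.of F with hVdef
  have hVF : ∀ s ∈ F, s ∈ V := fun s hs => (Ultrafilter.of_le F) hs
  have hcofV : ∀ s ∈ Filter.cofinite, s ∈ V := fun s hs => hVF s (hcof hs)
  have hVinf : ∀ s ∈ V, s.Infinite := by
    intro s hs
    by_contra hni
    rw [Set.not_infinite] at hni
    have hfin := hni
    have hsc : sᶜ ∈ V := hcofV _ (by rw [Filter.mem_cofinite, compl_compl]; exact hfin)
    exact (Ultrafilter.compl_notMem_iff.2 hs) hsc
  have htsqV : ∀ s ∈ V, ∀ n, tsq s n ∈ V := by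
    intro s hs n
    have h1 : (Set.Iio n)ᶜ ∈ V := hcofV _ (by
      rw [Filter.mem_cofinite, compl_compl]; exact Set.finite_Iio n)
    have : s ∩ (Set.Iio n)ᶜ ∈ V := Filter.inter_mem hs h1
    rwa [← Set.diff_eq] at this
  -- the generating family
  set Gen : Set (Set ℕ) :=
    {Y | ∃ X : ℕ → Set ℕ, CodedSeq cd seq ρ X ∧ (∀ n, X n ∈ V) ∧ Y = psInt X f} with hGen
  -- the kernel lemma
  have kernel : ∀ Z ∈ F, ∀ t : Set (Set ℕ), t ⊆ Gen → t.Finite →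
      ∃ W', W' ∈ Gen ∧ (∀ Y ∈ t, W' ⊆ Y) ∧ (W' \ Z).Finite ∧ W'.Infinite ∧
        CodedSeq cd seq σ (tsq W') := by
    intro Z hZ t htG htF
    obtain ⟨W, hWF, hWc, hWZ⟩ := hB Z hZ
    have main : ∀ t : Set (Set ℕ), t.Finite → t ⊆ Gen →
        ∃ Xs : ℕ → Set ℕ, CodedSeq cd seq ρ Xs ∧ (∀ n, Xs n ∈ V) ∧
          (∀ n, Xs n ⊆ tsq W n) ∧ (∀ Y ∈ t, psInt Xs f ⊆ Y) := by
      intro t htF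
      induction t, htF using Set.Finite.induction_on with
      | empty =>
        intro _
        refine ⟨tsq W, codedSeq_mono hpath (le_max_left _ _) hρ hWc, htsqV W (hVF W hWF), ?_, ?_⟩
        · exact fun n => le_rfl
        · simp
      | @insert a s ha hs ih =>
        intro hsub
        obtain ⟨X1, hX1c, hX1V, hX1W, hX1t⟩ := ih (fun Y hY => hsub (Set.mem_insert_of_mem _ hY))
        obtain ⟨Xa, hXac, hXaV, hYa⟩ := hsub (Set.mem_insert a s)
        refine ⟨fun n => X1 n ∩ Xa n, coded_inter hpath hid hcd hρ hX1c hXac,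
          fun n => Filter.inter_mem (hX1V n) (hXaV n),
          fun n => (Set.inter_subset_left).trans (hX1W n), ?_⟩
        intro Y hY
        rcases Set.mem_insert_iff.1 hY with rfl | hYs
        · rw [hYa]
          exact psInt_mono fun n => Set.inter_subset_right
        · exact (psInt_mono fun n => Set.inter_subset_left).trans (hX1t Y hYs)
    obtain ⟨Xs, hXsc, hXsV, hXsW, hXst⟩ := main t htF htG
    refine ⟨psInt Xs f, ⟨Xs, hXsc, hXsV, rfl⟩, hXst, ?_, ?_, ?_⟩
    · have h1 : psInt Xs f ⊆ W := by
        have := (psInt_mono (f := f) hXsW).trans (psInt_subset_zero (tsq_anti W))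
        rwa [tsq_zero] at this
      exact hWZ.subset (Set.diff_subset_diff_left h1)
    · refine psInt_infinite (fun n => hVinf _ (hXsV n)) ?_
      have hfg : fgrow Xs ∈ seq ρ := fgrow_mem hpath hρ hXsc
      have := hf _ hfg
      rw [evDomLE, Filter.not_eventually] at this
      exact this.mono (fun n hn => Nat.lt_of_not_le hn)
    · exact coded_ps hpath hid hσ (codedSeq_mono hpath (le_max_left _ _) hσ hXsc) hfσ
  -- the new filter
  refine ⟨F ⊓ Filter.generate Gen, ?_, ?_, ?_, ?_, ?_⟩
  · exact inf_le_left
  · -- NeBot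
    rw [← Filter.forall_mem_nonempty_iff_neBot]
    intro s hs
    rw [Filter.mem_inf_iff] at hs
    obtain ⟨t₁, ht₁, t₂, ht₂, rfl⟩ := hs
    rw [Filter.mem_generate_iff] at ht₂
    obtain ⟨t, htG, htF, hsub⟩ := ht₂
    obtain ⟨W', hW'G, hW't, hW'Z, hW'inf, _⟩ := kernel t₁ ht₁ t htG htF
    have h1 : (W' ∩ t₁).Infinite := by
      have h2 : W' \ (W' \ t₁) = W' ∩ t₁ := by
        ext x; simp only [Set.mem_diff, Set.mem_inter_iff, not_and, not_not]; tauto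
      rw [← h2]
      exact hW'inf.diff hW'Z
    obtain ⟨x, hxW, hxt⟩ := h1.nonempty
    exact ⟨x, hxt, hsub (Set.mem_sInter.2 fun Y hY => hW't Y hY hxW)⟩
  · -- Based
    refine ⟨σ, hσ, ?_⟩
    intro Z' hZ'
    rw [Filter.mem_inf_iff] at hZ'
    obtain ⟨t₁, ht₁, t₂, ht₂, rfl⟩ := hZ'
    rw [Filter.mem_generate_iff] at ht₂
    obtain ⟨t, htG, htF, hsub⟩ := ht₂
    obtain ⟨W', hW'G, hW't, hW'Z, hW'inf, hW'c⟩ := kernel t₁ ht₁ t htG htF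
    have hW'mem : W' ∈ F ⊓ Filter.generate Gen := by
      refine (inf_le_right : F ⊓ Filter.generate Gen ≤ Filter.generate Gen) ?_
      exact Filter.mem_generate_iff.2 ⟨{W'}, Set.singleton_subset_iff.2 hW'G,
        Set.finite_singleton _, by simp⟩
    refine ⟨W', hW'mem, hW'c, ?_⟩
    have hsub2 : W' \ (t₁ ∩ t₂) ⊆ W' \ t₁ := by
      intro x hx
      refine ⟨hx.1, fun hxt₁ => hx.2 ⟨hxt₁, ?_⟩⟩
      exact hsub (Set.mem_sInter.2 fun Y hY => hW't Y hY hx.1)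
    exact hW'Z.subset hsub2
  · -- deciding
    intro h hh
    have hcode : CodedSeq cd seq ρ (cd h) :=
      ⟨h, hpath.mono α ρ (le_max_right _ _) hρ hh, rfl⟩
    have hmemgen : ∀ S : Set ℕ, S ∈ V → CodedSeq cd seq ρ (tsq S) → S ∈ F ⊓ Filter.generate Gen := by
      intro S hSV hSc
      have hgen : psInt (tsq S) f ∈ Gen := ⟨tsq S, hSc, htsqV S hSV, rfl⟩
      have hmem : psInt (tsq S) f ∈ F ⊓ Filter.generate Gen :=
        (inf_le_right : F ⊓ Filter.generate Gen ≤ Filter.generate Gen)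
          (Filter.mem_generate_iff.2 ⟨{psInt (tsq S) f}, Set.singleton_subset_iff.2 hgen,
            Set.finite_singleton _, by simp⟩)
      refine Filter.mem_of_superset hmem ?_
      have := psInt_subset_zero (f := f) (tsq_anti S)
      rwa [tsq_zero] at this
    by_cases hSV : cd h 0 ∈ V
    · exact Or.inl (hmemgen _ hSV (coded_tsq_zero hpath hid hρ hcode))
    · refine Or.inr (hmemgen _ (Ultrafilter.compl_mem_iff_notMem.2 hSV)
        (coded_tsq_compl hpath hid hρ hcode))
  · -- pseudointersections
    intro h hh hmem
    have hcode : CodedSeq cd seq ρ (cd h) :=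
      ⟨h, hpath.mono α ρ (le_max_right _ _) hρ hh, rfl⟩
    have hgen : psInt (cd h) f ∈ Gen := ⟨cd h, hcode, fun n => hVF _ (hmem n), rfl⟩
    refine ⟨psInt (cd h) f, ?_, fun n => psInt_diff_finite (hcd h).1 n⟩
    exact (inf_le_right : F ⊓ Filter.generate Gen ≤ Filter.generate Gen)
      (Filter.mem_generate_iff.2 ⟨{psInt (cd h) f}, Set.singleton_subset_iff.2 hgen,
        Set.finite_singleton _, by simp⟩)

end Step

end Stmt8Aux
namespace Stmt8Aux

open Filter Set Order

section Rec

variable (cd : (ℕ → ℕ) → (ℕ → Set ℕ)) (κ : Cardinal) (seq : Ordinal → Set (ℕ → ℕ))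

open scoped Classical in
/-- The choice of a successor filter. -/
noncomputable def stepC (α : Ordinal) (F : Filter ℕ) : Filter ℕ :=
  if H : ∃ F', StepSpec cd κ seq α F F' then H.choose else F

lemma stepC_le (α : Ordinal) (F : Filter ℕ) : stepC cd κ seq α F ≤ F := by
  rw [stepC]
  split_ifs with H
  · exact H.choose_spec.1
  · exact le_rfl

lemma stepC_spec {α : Ordinal} {F : Filter ℕ} (H : ∃ F', StepSpec cd κ seq α F F') :
    StepSpec cd κ seq α F (stepC cd κ seq α F) := by
  rw [stepC, dif_pos H]
  exact H.choose_spec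

/-- The transfinite recursion constructing the tower of filters. -/
noncomputable def pathF : Ordinal → Filter ℕ := fun o =>
  Ordinal.limitRecOn o Filter.cofinite (fun α F => stepC cd κ seq α F)
    (fun o _ ih => ⨅ b : Set.Iio o, ih b.1 b.2)

@[simp] lemma pathF_zero : pathF cd κ seq 0 = Filter.cofinite :=
  Ordinal.limitRecOn_zero _ _ _

lemma pathF_succ (α : Ordinal) :
    pathF cd κ seq (succ α) = stepC cd κ seq α (pathF cd κ seq α) :=
  Ordinal.limitRecOn_succ _ _ _ _

lemma pathF_limit {o : Ordinal} (ho : Order.IsSuccLimit o) :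
    pathF cd κ seq o = ⨅ b : Set.Iio o, pathF cd κ seq b.1 :=
  Ordinal.limitRecOn_limit _ _ _ _ ho

lemma pathF_mono : ∀ α β : Ordinal, β ≤ α → pathF cd κ seq α ≤ pathF cd κ seq β := by
  intro α
  induction α using Ordinal.limitRecOn with
  | zero =>
    intro β hβ
    rw [nonpos_iff_eq_zero.1 hβ]
  | add_one α ih =>
    rw [Ordinal.add_one_eq_succ]
    intro β hβ
    rcases eq_or_lt_of_le hβ with rfl | hlt
    · exact le_rfl
    · have h1 : β ≤ α := Order.lt_succ_iff.1 hlt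
      exact le_trans (by rw [pathF_succ]; exact stepC_le cd κ seq α _) (ih β h1)
  | limit o ho ih =>
    intro β hβ
    rcases eq_or_lt_of_le hβ with rfl | hlt
    · exact le_rfl
    · rw [pathF_limit cd κ seq ho]
      exact iInf_le _ (⟨β, hlt⟩ : Set.Iio o)

lemma pathF_directed {o : Ordinal} :
    Directed (· ≥ ·) (fun b : Set.Iio o => pathF cd κ seq b.1) := by
  intro a b
  rcases le_total a.1 b.1 with h | h
  · exact ⟨b, pathF_mono cd κ seq b.1 a.1 h, le_rfl⟩
  · exact ⟨a, le_rfl, pathF_mono cd κ seq a.1 b.1 h⟩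

variable {cd κ seq} {dcd : (ℕ → Set ℕ) → (ℕ → ℕ)}

theorem pathF_good
    (hcd : ∀ f, Antitone (cd f) ∧ (⋂ n, cd f n) = ∅)
    (hid : ∀ X : ℕ → Set ℕ, Antitone X → (⋂ n, X n) = ∅ → cd (dcd X) = X)
    (hκ : κ.IsRegular)
    (hpath : IsPathway evDomLE (PPtOps cd dcd) κ.ord seq) :
    ∀ α : Ordinal, α ≤ κ.ord → (pathF cd κ seq α).NeBot ∧ pathF cd κ seq α ≤ Filter.cofinite ∧
      (α < κ.ord → ∃ μ < κ.ord, Based cd seq μ (pathF cd κ seq α)) := by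
  intro α
  induction α using Ordinal.limitRecOn with
  | zero =>
    intro _
    rw [pathF_zero]
    refine ⟨Filter.cofinite_neBot, le_rfl, fun _ => ?_⟩
    obtain ⟨γ, hγ, hmem⟩ := mem_level hpath (dcd (tsq Set.univ))
    refine ⟨γ, hγ, ?_⟩
    intro Z hZ
    refine ⟨Set.univ, Filter.univ_mem, ⟨dcd (tsq Set.univ), hmem,
      hid _ (tsq_anti _) (tsq_iInter _)⟩, ?_⟩
    rw [Filter.mem_cofinite] at hZ
    have : Set.univ \ Z = Zᶜ := by ext x; simp
    rwa [this]
  | add_one α ih =>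
    rw [Ordinal.add_one_eq_succ]
    intro hsucc
    have hα : α < κ.ord := lt_of_lt_of_le (Order.lt_succ α) hsucc
    obtain ⟨hne, hcof, hbased⟩ := ih hα.le
    obtain ⟨μ, hμ, hB⟩ := hbased hα
    have H : ∃ F', StepSpec cd κ seq α (pathF cd κ seq α) F' :=
      succ_step hcd hid hpath hα hμ hne hcof hB
    have spec := stepC_spec cd κ seq H
    rw [← pathF_succ] at spec
    obtain ⟨hle, hne', hbased', _, _⟩ := spec
    exact ⟨hne', hle.trans hcof, fun _ => hbased'⟩
  | limit o ho ih =>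
    intro ho'
    haveI : Nonempty (Set.Iio o) := ⟨⟨0, ho.pos⟩⟩
    have hdir := pathF_directed cd κ seq (o := o)
    have hne : ∀ b : Set.Iio o, (pathF cd κ seq b.1).NeBot :=
      fun b => (ih b.1 b.2 (le_of_lt (lt_of_lt_of_le b.2 ho'))).1
    constructor
    · rw [pathF_limit cd κ seq ho]
      exact Filter.iInf_neBot_of_directed' hdir hne
    constructor
    · refine le_trans (pathF_mono cd κ seq o 0 (zero_le (a := o))) ?_
      rw [pathF_zero]
    · intro holt
      -- choose coded-base levels below o and take their sup
      have hch : ∀ b : Set.Iio o, ∃ μ < κ.ord, Based cd seq μ (pathF cd κ seq b.1) :=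
        fun b => (ih b.1 b.2 (le_of_lt (lt_of_lt_of_le b.2 ho'))).2.2 (lt_trans b.2 holt)
      set μf : ∀ b < o, Ordinal := fun b hb => (hch ⟨b, hb⟩).choose with hμf
      have hμflt : ∀ b hb, μf b hb < κ.ord := fun b hb => (hch ⟨b, hb⟩).choose_spec.1
      have hμfB : ∀ b hb, Based cd seq (μf b hb) (pathF cd κ seq b) :=
        fun b hb => (hch ⟨b, hb⟩).choose_spec.2
      set μs := Ordinal.bsup o μf with hμs
      have hμslt : μs < κ.ord :=
        Cardinal.bsup_lt_ord_of_isRegular hκ (Cardinal.lt_ord.1 holt) hμflt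
      refine ⟨μs, hμslt, ?_⟩
      intro Z hZ
      rw [pathF_limit cd κ seq ho, Filter.mem_iInf_of_directed hdir] at hZ
      obtain ⟨b, hb⟩ := hZ
      obtain ⟨W, hWF, hWc, hWZ⟩ := hμfB b.1 b.2 Z hb
      refine ⟨W, ?_, codedSeq_mono hpath (Ordinal.le_bsup μf b.1 b.2) hμslt hWc, hWZ⟩
      exact pathF_mono cd κ seq o b.1 b.2.le hWF

end Rec

end Stmt8Aux

/-- if `cd : ω^ω → 𝔓(ω)^{↓ω}` and `dcd : 𝔓(ω)^{↓ω} → ω^ω` satisfy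
`cd ∘ dcd = id` on `𝔓(ω)^{↓ω}`, `κ` is regular, and there exists a
`⟨𝔡, ℱ_{P-pt}, κ⟩`-pathway (for `𝔡 = ⟨ω^ω, ω^ω, ≤*⟩`), then there exists a P-point:
a nonprincipal ultrafilter `u` on `ω` such that every countable sequence of elements of
`u` admits a pseudointersection in `u`. -/
theorem stmt8
    (cd : (ℕ → ℕ) → (ℕ → Set ℕ))
    (hcd : ∀ f, Antitone (cd f) ∧ (⋂ n, cd f n) = ∅)
    (dcd : (ℕ → Set ℕ) → (ℕ → ℕ))
    (hid : ∀ X : ℕ → Set ℕ, Antitone X → (⋂ n, X n) = ∅ → cd (dcd X) = X)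
    (κ : Cardinal) (hκ : κ.IsRegular)
    (seq : Ordinal → Set (ℕ → ℕ))
    (hpath : IsPathway evDomLE (PPtOps cd dcd) κ.ord seq) :
    ∃ u : Ultrafilter ℕ, (∀ a : ℕ, u ≠ pure a) ∧
      ∀ X : ℕ → Set ℕ, (∀ n, X n ∈ u) → ∃ Y ∈ u, ∀ n, (Y \ X n).Finite := by
  classical
  rcases eq_or_lt_of_le hκ.1 with hω | hω
  · -- `κ = ℵ₀` is impossible: a countable union of non-dominating sets cannot cover `ω^ω`.
    exfalso
    have hord : κ.ord = Ordinal.omega0 := by rw [← hω, Cardinal.ord_aleph0]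
    have hx : ∀ n : ℕ, ∃ x : ℕ → ℕ, ∀ y ∈ seq n, ¬ evDomLE x y := by
      intro n
      exact hpath.avoid n (by rw [hord]; exact Ordinal.nat_lt_omega0 n)
    choose x hxspec using hx
    set g : ℕ → ℕ := fun k => (Finset.range (k + 1)).sup (fun n => x n k) with hg
    obtain ⟨ν, hν, hgν⟩ := Stmt8Aux.mem_level hpath g
    rw [hord, Ordinal.lt_omega0] at hν
    obtain ⟨m, rfl⟩ := hν
    refine hxspec m g hgν ?_
    rw [evDomLE, Filter.eventually_atTop]
    refine ⟨m, fun k hk => ?_⟩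
    exact Finset.le_sup (f := fun n => x n k) (Finset.mem_range.2 (by omega))
  · -- main case: `κ` is uncountable and regular
    set U := Stmt8Aux.pathF cd κ seq κ.ord with hU
    have good := Stmt8Aux.pathF_good hcd hid hκ hpath
    have hUne : U.NeBot := (good κ.ord le_rfl).1
    have hUcof : U ≤ Filter.cofinite := (good κ.ord le_rfl).2.1
    have hlim : Order.IsSuccLimit κ.ord := Cardinal.isSuccLimit_ord hκ.1
    haveI : Nonempty (Set.Iio κ.ord) := ⟨⟨0, hlim.pos⟩⟩
    have hdir := Stmt8Aux.pathF_directed cd κ seq (o := κ.ord)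
    have hmemU : ∀ s : Set ℕ, s ∈ U ↔ ∃ b : Set.Iio κ.ord, s ∈ Stmt8Aux.pathF cd κ seq b.1 := by
      intro s
      rw [hU, Stmt8Aux.pathF_limit cd κ seq hlim, Filter.mem_iInf_of_directed hdir]
    have hUle : ∀ α ≤ κ.ord, ∀ s ∈ Stmt8Aux.pathF cd κ seq α, s ∈ U := fun α hα s hs =>
      Stmt8Aux.pathF_mono cd κ seq κ.ord α hα hs
    have hstep : ∀ γ : Ordinal, γ < κ.ord →
        Stmt8Aux.StepSpec cd κ seq γ (Stmt8Aux.pathF cd κ seq γ)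
          (Stmt8Aux.pathF cd κ seq (Order.succ γ)) := by
      intro γ hγ
      obtain ⟨hne, hcof, hbased⟩ := good γ hγ.le
      obtain ⟨μ, hμ, hB⟩ := hbased hγ
      have H := Stmt8Aux.succ_step hcd hid hpath hγ hμ hne hcof hB
      have := Stmt8Aux.stepC_spec cd κ seq H
      rwa [← Stmt8Aux.pathF_succ] at this
    have hdec : ∀ S : Set ℕ, S ∈ U ∨ Sᶜ ∈ U := by
      intro S
      obtain ⟨γ, hγ, hmem⟩ := Stmt8Aux.mem_level hpath (dcd (Stmt8Aux.tsq S))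
      have hc : cd (dcd (Stmt8Aux.tsq S)) = Stmt8Aux.tsq S :=
        hid _ (Stmt8Aux.tsq_anti S) (Stmt8Aux.tsq_iInter S)
      have hd := (hstep γ hγ).2.2.2.1 _ hmem
      rw [hc, Stmt8Aux.tsq_zero] at hd
      have hsucc : Order.succ γ ≤ κ.ord := (hlim.succ_lt hγ).le
      rcases hd with h | h
      · exact Or.inl (hUle _ hsucc _ h)
      · exact Or.inr (hUle _ hsucc _ h)
    have hUproper : ∀ s ∈ U, sᶜ ∉ U := by
      intro s hs hsc
      have h1 : s ∩ sᶜ ∈ U := Filter.inter_mem hs hsc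
      rw [Set.inter_compl_self] at h1
      exact Filter.empty_notMem U h1
    set u : Ultrafilter ℕ := Ultrafilter.ofComplNotMemIff U (fun s =>
      ⟨fun h => (hdec s).resolve_right h, fun h => hUproper s h⟩) with hu
    have humem : ∀ s : Set ℕ, s ∈ u ↔ s ∈ U := fun s => Iff.rfl
    refine ⟨u, ?_, ?_⟩
    · intro a ha
      have h1 : ({a}ᶜ : Set ℕ) ∈ u := by
        rw [humem]
        exact hUcof (by rw [Filter.mem_cofinite, compl_compl]; exact Set.finite_singleton a)
      rw [ha] at h1
      simp at h1
    · intro X hX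
      have hXU : ∀ n, ∃ δ, δ < κ.ord ∧ X n ∈ Stmt8Aux.pathF cd κ seq δ := by
        intro n
        obtain ⟨b, hb⟩ := (hmemU (X n)).1 ((humem _).1 (hX n))
        exact ⟨b.1, b.2, hb⟩
      choose δ hδlt hδmem using hXU
      set X' : ℕ → Set ℕ := fun n => (⋂ m ∈ Finset.range (n + 1), X m) \ Set.Iio n with hX'
      have hanti : Antitone X' := by
        intro a b hab y hy
        obtain ⟨hy1, hy2⟩ := hy
        refine ⟨?_, fun hlt => hy2 (lt_of_lt_of_le hlt (by exact_mod_cast hab))⟩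
        refine Set.mem_iInter₂.2 fun m hm => Set.mem_iInter₂.1 hy1 m ?_
        simp only [Finset.mem_coe, Finset.mem_range] at hm ⊢
        omega
      have hempty : (⋂ n, X' n) = ∅ := by
        ext y
        simp only [Set.mem_iInter, Set.mem_empty_iff_false, iff_false, not_forall]
        refine ⟨y + 1, fun hy => hy.2 (Nat.lt_succ_self y)⟩
      have hcdX' : cd (dcd X') = X' := hid _ hanti hempty
      obtain ⟨γ, hγ, hγmem⟩ := Stmt8Aux.mem_level hpath (dcd X')
      have hbdd := Ordinal.bddAbove_range (fun n : ℕ => max γ (δ n))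
      set A : Ordinal := iSup (fun n : ℕ => max γ (δ n)) with hA
      have hAlt : A < κ.ord := by
        refine Cardinal.iSup_lt_ord_lift_of_isRegular hκ ?_ (fun n => max_lt hγ (hδlt n))
        simpa using hω
      have hγA : γ ≤ A := le_trans (le_max_left _ _) (le_ciSup hbdd 0)
      have hδA : ∀ n, δ n ≤ A := fun n => le_trans (le_max_right _ _) (le_ciSup hbdd n)
      have hmemA : dcd X' ∈ seq A := hpath.mono γ A hγA hAlt hγmem
      have hcofA : Stmt8Aux.pathF cd κ seq A ≤ Filter.cofinite := (good A hAlt.le).2.1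
      have hentries : ∀ n, X' n ∈ Stmt8Aux.pathF cd κ seq A := by
        intro n
        have h1 : (⋂ m ∈ Finset.range (n + 1), X m) ∈ Stmt8Aux.pathF cd κ seq A := by
          rw [Filter.biInter_finset_mem]
          intro m _
          exact Stmt8Aux.pathF_mono cd κ seq A (δ m) (hδA m) (hδmem m)
        have h2 : (Set.Iio n)ᶜ ∈ Stmt8Aux.pathF cd κ seq A :=
          hcofA (by rw [Filter.mem_cofinite, compl_compl]; exact Set.finite_Iio n)
        have h3 := Filter.inter_mem h1 h2
        rwa [← Set.diff_eq] at h3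
      obtain ⟨Y, hYmem, hYfin⟩ := (hstep A hAlt).2.2.2.2 _ hmemA (by
        intro n; rw [hcdX']; exact hentries n)
      refine ⟨Y, (humem Y).2 (hUle _ (hlim.succ_lt hAlt).le _ hYmem), ?_⟩
      intro n
      have h1 : Y \ X n ⊆ Y \ X' n := by
        intro y hy
        refine ⟨hy.1, fun hy' => hy.2 ?_⟩
        exact Set.mem_iInter₂.1 hy'.1 n (by simp)
      have h2 := hYfin n
      rw [hcdX'] at h2
      exact h2.subset h1
end

section
/- If 𝔡 = 𝔠 (the least cardinality of a ≤*-dominating family in ω^ω equals the cardinality of the continuum), then for every finite family ℱ of finitary operations on ω^ω there exists a ⟨𝔡, ℱ, 𝔠⟩-pathway. -/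
open Cardinal Set

/-- The dominating number `𝔡`: the least cardinality of a `≤*`-dominating family. -/
noncomputable def dNumber : Cardinal :=
  sInf {c | ∃ D : Set (ℕ → ℕ), #D = c ∧ ∀ f : ℕ → ℕ, ∃ g ∈ D, evDomLE f g}

section Closure
variable {B : Type*} (𝓕 : Set (Σ n : ℕ, (Fin n → B) → B))

/-- One step of closing a set under the operations in `𝓕`. -/
def stepOp (T : Set B) : Set B :=
  T ∪ ⋃ F ∈ 𝓕, F.2 '' {v : Fin F.1 → B | ∀ i, v i ∈ T}

lemma subset_stepOp (T : Set B) : T ⊆ stepOp 𝓕 T := subset_union_left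

lemma stepOp_mono {T T' : Set B} (h : T ⊆ T') : stepOp 𝓕 T ⊆ stepOp 𝓕 T' := by
  refine union_subset_union h (iUnion₂_mono fun F _ => image_mono ?_)
  intro v hv i
  exact h (hv i)

/-- The closure of a set under the operations in `𝓕`. -/
def clOp (S : Set B) : Set B := ⋃ n : ℕ, (stepOp 𝓕)^[n] S

lemma iter_mono {T T' : Set B} (h : T ⊆ T') (n : ℕ) :
    (stepOp 𝓕)^[n] T ⊆ (stepOp 𝓕)^[n] T' := by
  induction n with
  | zero => exact h
  | succ n ih =>
    rw [Function.iterate_succ_apply', Function.iterate_succ_apply']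
    exact stepOp_mono 𝓕 ih

lemma iter_le_iter {m n : ℕ} (h : m ≤ n) (S : Set B) :
    (stepOp 𝓕)^[m] S ⊆ (stepOp 𝓕)^[n] S := by
  induction n with
  | zero => simp [Nat.le_zero.mp h]
  | succ n ih =>
    rcases Nat.lt_or_ge m (n+1) with h' | h'
    · rw [Function.iterate_succ_apply']
      exact (ih (Nat.lt_succ_iff.mp h')).trans (subset_stepOp 𝓕 _)
    · have : m = n + 1 := le_antisymm h h'
      simp [this]

lemma subset_clOp (S : Set B) : S ⊆ clOp 𝓕 S :=
  subset_iUnion_of_subset 0 subset_rfl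

lemma clOp_mono {S S' : Set B} (h : S ⊆ S') : clOp 𝓕 S ⊆ clOp 𝓕 S' :=
  iUnion_mono fun n => iter_mono 𝓕 h n

lemma clOp_closed (S : Set B) {F} (hF : F ∈ 𝓕) : ClosedUnderOp (clOp 𝓕 S) F := by
  intro v hv
  choose m hm using fun i => mem_iUnion.mp (hv i)
  set N := Finset.univ.sup m with hN
  have hvN : ∀ i, v i ∈ (stepOp 𝓕)^[N] S :=
    fun i => iter_le_iter 𝓕 (Finset.le_sup (Finset.mem_univ i)) S (hm i)
  have : F.2 v ∈ stepOp 𝓕 ((stepOp 𝓕)^[N] S) :=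
    Or.inr (mem_biUnion hF ⟨v, hvN, rfl⟩)
  exact mem_iUnion.mpr ⟨N+1, by rwa [Function.iterate_succ_apply']⟩

lemma clOp_min {S T : Set B} (hST : S ⊆ T) (hT : ∀ F ∈ 𝓕, ClosedUnderOp T F) :
    clOp 𝓕 S ⊆ T := by
  refine iUnion_subset fun n => ?_
  induction n with
  | zero => exact hST
  | succ n ih =>
    rw [Function.iterate_succ_apply']
    rintro x (hx | hx)
    · exact ih hx
    · simp only [mem_iUnion, mem_image, mem_setOf_eq] at hx
      obtain ⟨F, hF, v, hv, rfl⟩ := hx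
      exact hT F hF v fun i => ih (hv i)

end Closure

section Card
variable {B : Type} (𝓕 : Set (Σ n : ℕ, (Fin n → B) → B))

lemma card_stepOp (h𝓕 : 𝓕.Finite) {T : Set B} {κ : Cardinal} (hκ : ℵ₀ ≤ κ)
    (hT : #T ≤ κ) : #(stepOp 𝓕 T) ≤ κ := by
  have hpiece : ∀ F : Σ n : ℕ, (Fin n → B) → B,
      #(F.2 '' {v : Fin F.1 → B | ∀ i, v i ∈ T}) ≤ κ := by
    intro F
    refine (mk_image_le).trans ?_
    have hinj : #({v : Fin F.1 → B | ∀ i, v i ∈ T}) ≤ #(Fin F.1 → T) := by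
      refine mk_le_of_injective (f := fun v => fun i => (⟨v.1 i, v.2 i⟩ : T)) ?_
      intro v w hvw
      ext i
      exact congrArg Subtype.val (congrFun hvw i)
    refine hinj.trans ?_
    have : #(Fin F.1 → T) = #T ^ (F.1 : Cardinal) := by
      rw [← Cardinal.power_def, mk_fin]
    rw [this, Cardinal.power_natCast]
    calc (#T) ^ F.1 ≤ κ ^ F.1 := pow_le_pow_left₀ zero_le hT _
      _ ≤ κ := power_nat_le hκ
  have hbu : #(⋃ F ∈ 𝓕, F.2 '' {v : Fin F.1 → B | ∀ i, v i ∈ T}) ≤ κ := by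
    refine (mk_biUnion_le _ 𝓕).trans ?_
    have h1 : #𝓕 ≤ κ := (h𝓕.lt_aleph0).le.trans hκ
    have h2 : ⨆ F : 𝓕, #((F : Σ n : ℕ, (Fin n → B) → B).2 ''
        {v : Fin (F : Σ n : ℕ, (Fin n → B) → B).1 → B | ∀ i, v i ∈ T}) ≤ κ :=
      ciSup_le' fun F => hpiece F
    calc #𝓕 * _ ≤ κ * κ := mul_le_mul' h1 h2
      _ = κ := mul_eq_self hκ
  refine (mk_union_le _ _).trans ?_
  calc #T + _ ≤ κ + κ := add_le_add hT hbu
    _ = κ := add_eq_self hκ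

lemma card_clOp (h𝓕 : 𝓕.Finite) {S : Set B} {κ : Cardinal} (hκ : ℵ₀ ≤ κ)
    (hS : #S ≤ κ) : #(clOp 𝓕 S) ≤ κ := by
  have hiter : ∀ n, #((stepOp 𝓕)^[n] S) ≤ κ := by
    intro n
    induction n with
    | zero => exact hS
    | succ n ih =>
      rw [Function.iterate_succ_apply']
      exact card_stepOp 𝓕 h𝓕 hκ ih
  refine (mk_iUnion_le _).trans ?_
  calc #ℕ * ⨆ n, #((stepOp 𝓕)^[n] S) ≤ κ * κ :=
      mul_le_mul' (by simpa using hκ) (ciSup_le' hiter)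
    _ = κ := mul_eq_self hκ

end Card

lemma mk_natfun : #(ℕ → ℕ) = Cardinal.continuum := by
  rw [← Cardinal.power_def, mk_nat, aleph0_power_aleph0]

universe u

theorem stmt13_aux (h : dNumber = Cardinal.continuum)
    (𝓕 : Set (Σ n : ℕ, (Fin n → (ℕ → ℕ)) → (ℕ → ℕ))) (h𝓕 : 𝓕.Finite) :
    ∃ seq : Ordinal.{u} → Set (ℕ → ℕ),
      IsPathway evDomLE 𝓕 Cardinal.continuum.{u}.ord seq := by
  classical
  -- an enumeration of `ℕ → ℕ` of length `𝔠.ord`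
  have hmk : Cardinal.lift.{0} #(Cardinal.continuum.{u}.ord.ToType) =
      Cardinal.lift.{u} #(ℕ → ℕ) := by
    rw [Cardinal.mk_toType, Cardinal.card_ord, mk_natfun]
    rw [Cardinal.lift_continuum, Cardinal.lift_continuum]
  obtain ⟨φ⟩ := Cardinal.lift_mk_eq'.mp hmk
  set e : Ordinal.{u} → (ℕ → ℕ) := fun α =>
    if hα : α < Cardinal.continuum.ord then
      φ ((Ordinal.ToType.mk (o := Cardinal.continuum.ord)) ⟨α, hα⟩)
    else fun _ => 0 with he
  have hesurj : ∀ f : ℕ → ℕ, ∃ β < Cardinal.continuum.{u}.ord, e β = f := by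
    intro f
    set t := (Ordinal.ToType.mk (o := Cardinal.continuum.{u}.ord)).symm (φ.symm f) with ht
    refine ⟨t.1, t.2, ?_⟩
    show (if hα : t.1 < Cardinal.continuum.ord then
      φ ((Ordinal.ToType.mk (o := Cardinal.continuum.ord)) ⟨t.1, hα⟩)
    else fun _ => 0) = f
    rw [dif_pos (show t.1 < Cardinal.continuum.ord from t.2)]
    show φ ((Ordinal.ToType.mk (o := Cardinal.continuum.ord)) t) = f
    rw [ht]
    simp
  -- cardinality bound for the pieces of the pathway
  have hcard : ∀ α : Ordinal.{u}, α < Cardinal.continuum.ord →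
      #(clOp 𝓕 (e '' Iio α)) < Cardinal.continuum.{0} := by
    intro α hα
    have h1 : Cardinal.lift.{u + 1} #(e '' Iio α) ≤
        Cardinal.lift.{u + 1} α.card := by
      have := mk_image_le_lift (f := e) (s := Iio α)
      rw [Ordinal.mk_Iio_ordinal] at this
      simpa using this
    have h2 : Cardinal.lift.{u} #(e '' Iio α) ≤ α.card := by
      rw [← Cardinal.lift_le.{u + 1}, Cardinal.lift_lift]
      exact h1
    set κ : Cardinal.{u} := α.card ⊔ ℵ₀ with hκdef
    have hκ : ℵ₀ ≤ κ := le_sup_right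
    have hcl : Cardinal.lift.{u} #(clOp 𝓕 (e '' Iio α)) ≤ κ := by
      have hb : #(clOp 𝓕 (e '' Iio α)) ≤ #(e '' Iio α) ⊔ ℵ₀ :=
        card_clOp 𝓕 h𝓕 le_sup_right le_sup_left
      calc Cardinal.lift.{u} #(clOp 𝓕 (e '' Iio α))
          ≤ Cardinal.lift.{u} (#(e '' Iio α) ⊔ ℵ₀) := Cardinal.lift_le.mpr hb
        _ = Cardinal.lift.{u} #(e '' Iio α) ⊔ ℵ₀ := by
            rw [Cardinal.lift_max, Cardinal.lift_aleph0]
        _ ≤ κ := sup_le (h2.trans le_sup_left) le_sup_right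
    have hκlt : κ < Cardinal.continuum := by
      rw [hκdef]
      exact sup_lt_iff.mpr ⟨Cardinal.lt_ord.mp hα, aleph0_lt_continuum⟩
    have hfin : Cardinal.lift.{u} #(clOp 𝓕 (e '' Iio α)) <
        Cardinal.lift.{u} Cardinal.continuum.{0} := by
      rw [Cardinal.lift_continuum]
      exact hcl.trans_lt hκlt
    exact Cardinal.lift_lt.mp hfin
  -- the pathway
  refine ⟨fun α => clOp 𝓕 (e '' Iio α), ?_, ?_, ?_, ?_, ?_⟩
  · -- mono
    intro α β hαβ _
    exact clOp_mono 𝓕 (image_mono (Iio_subset_Iio hαβ))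
  · -- cont
    intro γ _ hγ
    apply subset_antisymm
    · refine clOp_min 𝓕 ?_ ?_
      · rintro x ⟨β, hβ, rfl⟩
        refine mem_iUnion₂.mpr ⟨Order.succ β, hγ.succ_lt hβ, ?_⟩
        exact subset_clOp 𝓕 _ ⟨β, Order.lt_succ β, rfl⟩
      · intro F hF v hv
        choose α hα hvα using fun i => mem_iUnion₂.mp (hv i)
        have hNγ : Finset.univ.sup α < γ :=
          (Finset.sup_lt_iff hγ.pos).mpr fun i _ => hα i
        have hvN : ∀ i, v i ∈ clOp 𝓕 (e '' Iio (Finset.univ.sup α)) := fun i =>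
          clOp_mono 𝓕
            (image_mono (Iio_subset_Iio (Finset.le_sup (Finset.mem_univ i)))) (hvα i)
        exact mem_iUnion₂.mpr ⟨_, hNγ, clOp_closed 𝓕 _ hF v hvN⟩
    · exact iUnion₂_subset fun α hα =>
        clOp_mono 𝓕 (image_mono (Iio_subset_Iio hα.le))
  · -- total
    refine eq_univ_of_forall fun f => ?_
    obtain ⟨β, hβ, hef⟩ := hesurj f
    refine mem_iUnion₂.mpr ⟨Order.succ β,
      (Cardinal.isSuccLimit_ord aleph0_le_continuum).succ_lt hβ, ?_⟩
    exact subset_clOp 𝓕 _ ⟨β, Order.lt_succ β, hef⟩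
  · -- avoid
    intro α hα
    by_contra hcon
    push_neg at hcon
    have hdom : dNumber ≤ #(clOp 𝓕 (e '' Iio α)) :=
      csInf_le' ⟨clOp 𝓕 (e '' Iio α), rfl, hcon⟩
    rw [h] at hdom
    exact absurd (hcard α hα) (not_lt.mpr hdom)
  · -- closedF
    intro α _ F hF
    exact clOp_closed 𝓕 _ hF

/-- if `𝔡 = 𝔠`, then for every finite family `𝓕` of finitary operations on
`ω^ω` there exists a `⟨𝔡, 𝓕, 𝔠⟩`-pathway. -/
theorem stmt13 (h : dNumber = Cardinal.continuum)
    (𝓕 : Set (Σ n : ℕ, (Fin n → (ℕ → ℕ)) → (ℕ → ℕ))) (h𝓕 : 𝓕.Finite) :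
    ∃ seq : Ordinal → Set (ℕ → ℕ),
      IsPathway evDomLE 𝓕 Cardinal.continuum.ord seq :=
  stmt13_aux h 𝓕 h𝓕
end

section
/- If 𝔡 = 𝔠 (the least cardinality of a ≤*-dominating family in ω^ω equals the cardinality of the continuum), then there exists a P-point. -/
open Cardinal Set

/-! ### Auxiliary development for Ketonen's theorem -/

attribute [local instance] Classical.propDecidable

noncomputable local instance : DecidableEq (Set ℕ) := Classical.decEq _

/-- All finite intersections of members of `G` are infinite. -/
def FIPinf (G : Set (Set ℕ)) : Prop :=
  ∀ t : Finset (Set ℕ), ↑t ⊆ G → (⋂₀ (t : Set (Set ℕ))).Infinite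

lemma nondominating {D : Set (ℕ → ℕ)} (hD : #D < dNumber) :
    ∃ g : ℕ → ℕ, ∀ f ∈ D, ∃ᶠ n in Filter.atTop, f n < g n := by
  by_contra h
  push_neg at h
  have hdom : ∀ g : ℕ → ℕ, ∃ f ∈ D, evDomLE g f := by
    intro g
    obtain ⟨f, hf, hev⟩ := h g
    refine ⟨f, hf, ?_⟩
    have := hev
    simpa only [evDomLE, not_lt] using this
  have : dNumber ≤ #D := csInf_le' ⟨D, rfl, hdom⟩
  exact absurd hD (not_lt.mpr this)

lemma fipinf_insert {G : Set (Set ℕ)} {Y : Set ℕ}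
    (h : ∀ t : Finset (Set ℕ), ↑t ⊆ G → (Y ∩ ⋂₀ (t : Set (Set ℕ))).Infinite) :
    FIPinf (insert Y G) := by
  intro t ht
  have h1 : ↑(t.erase Y) ⊆ G := by
    intro s hs
    simp only [Finset.coe_erase, Set.mem_diff, Set.mem_singleton_iff] at hs
    rcases ht hs.1 with h | h
    · exact absurd h hs.2
    · exact h
  refine (h _ h1).mono ?_
  rintro m ⟨hmY, hm⟩
  intro s hs
  by_cases hsY : s = Y
  · exact hsY ▸ hmY
  · refine hm s ?_
    simp only [Finset.coe_erase, Set.mem_diff, Set.mem_singleton_iff]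
    exact ⟨hs, hsY⟩

lemma fipinf_dichotomy {G : Set (Set ℕ)} (hG : FIPinf G) (A : Set ℕ) :
    FIPinf (insert A G) ∨ FIPinf (insert Aᶜ G) := by
  by_contra h
  push_neg at h
  obtain ⟨h1, h2⟩ := h
  simp only [FIPinf, not_forall] at h1 h2
  obtain ⟨t₁, ht₁, hfin₁⟩ := h1
  obtain ⟨t₂, ht₂, hfin₂⟩ := h2
  rw [Set.not_infinite] at hfin₁ hfin₂
  have e1 : ↑(t₁.erase A) ⊆ G := by
    intro s hs
    simp only [Finset.coe_erase, Set.mem_diff, Set.mem_singleton_iff] at hs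
    rcases ht₁ hs.1 with h | h
    · exact absurd h hs.2
    · exact h
  have e2 : ↑(t₂.erase Aᶜ) ⊆ G := by
    intro s hs
    simp only [Finset.coe_erase, Set.mem_diff, Set.mem_singleton_iff] at hs
    rcases ht₂ hs.1 with h | h
    · exact absurd h hs.2
    · exact h
  have hsub : ⋂₀ ((t₁.erase A ∪ t₂.erase Aᶜ : Finset (Set ℕ)) : Set (Set ℕ)) ⊆
      (⋂₀ (t₁ : Set (Set ℕ))) ∪ (⋂₀ (t₂ : Set (Set ℕ))) := by
    intro m hm
    by_cases hmA : m ∈ A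
    · left
      intro s hs
      by_cases hsA : s = A
      · exact hsA ▸ hmA
      · exact hm s (by simp [Finset.mem_erase, hsA, hs])
    · right
      intro s hs
      by_cases hsA : s = Aᶜ
      · exact hsA ▸ hmA
      · exact hm s (by simp [Finset.mem_erase, hsA, hs])
  have := hG (t₁.erase A ∪ t₂.erase Aᶜ) (by
    intro s hs
    rcases Finset.mem_union.mp (Finset.mem_coe.mp hs) with h' | h'
    · exact e1 (Finset.mem_coe.mpr h')
    · exact e2 (Finset.mem_coe.mpr h'))
  exact this ((hfin₁.union hfin₂).subset hsub)

/-- The key lemma: given a small family `G` with the infinite-FIP, and a sequence `X`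
compatible with it, there is a pseudo-intersection of `X` preserving the infinite-FIP. -/
lemma keyLemma (hd : dNumber = Cardinal.continuum) {G : Set (Set ℕ)}
    (hc : #G < Cardinal.continuum) {X : ℕ → Set ℕ}
    (hX : FIPinf (G ∪ Set.range X)) :
    ∃ Y : Set ℕ, (∀ n, (Y \ X n).Finite) ∧ FIPinf (insert Y G) := by
  classical
  set X' : ℕ → Set ℕ := fun n => ⋂ k ∈ Finset.range (n + 1), X k with hX'
  have hX'sub : ∀ {k n : ℕ}, k ≤ n → X' n ⊆ X k := by
    intro k n hkn m hm
    simp only [hX', Set.mem_iInter] at hm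
    exact hm k (Finset.mem_range.mpr (Nat.lt_succ_of_le hkn))
  -- every finite intersection over G meets each X' n in an infinite set
  have hinf : ∀ (t : Finset (Set ℕ)), ↑t ⊆ G → ∀ n,
      ((⋂₀ (t : Set (Set ℕ))) ∩ X' n).Infinite := by
    intro t ht n
    have h1 : ↑(t ∪ (Finset.range (n + 1)).image X) ⊆ G ∪ Set.range X := by
      push_cast
      apply Set.union_subset
      · exact ht.trans Set.subset_union_left
      · intro s hs
        simp only [Finset.coe_image, Set.mem_image] at hs
        obtain ⟨k, _, rfl⟩ := hs
        exact Or.inr ⟨k, rfl⟩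
    refine (hX _ h1).mono ?_
    intro m hm
    constructor
    · intro s hs
      exact hm s (by simp [hs])
    · simp only [hX', Set.mem_iInter]
      intro k hk
      refine hm (X k) ?_
      simp only [Finset.coe_union, Set.mem_union, Finset.coe_image, Set.mem_image]
      exact Or.inr ⟨k, by simpa using hk, rfl⟩
  -- the family of "first element above n" functions
  set F : Finset (Set ℕ) → ℕ → ℕ :=
    fun t n => sInf {m | m ∈ (⋂₀ (t : Set (Set ℕ))) ∩ X' n ∧ n < m} with hF
  set D : Set (ℕ → ℕ) := F '' {t : Finset (Set ℕ) | ↑t ⊆ G} with hD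
  have hFspec : ∀ (t : Finset (Set ℕ)), ↑t ⊆ G → ∀ n,
      F t n ∈ (⋂₀ (t : Set (Set ℕ))) ∩ X' n ∧ n < F t n := by
    intro t ht n
    have hne : {m | m ∈ (⋂₀ (t : Set (Set ℕ))) ∩ X' n ∧ n < m}.Nonempty := by
      obtain ⟨b, hb, hnb⟩ := (hinf t ht n).exists_gt n
      exact ⟨b, hb, hnb⟩
    exact Nat.sInf_mem hne
  -- D is small
  have hDcard : #D < dNumber := by
    rw [hd]
    refine lt_of_le_of_lt mk_image_le ?_
    have hle : #{t : Finset (Set ℕ) | ↑t ⊆ G} ≤ #(Finset G) := by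
      refine mk_le_of_injective
        (f := fun t => (t : Finset (Set ℕ)).subtype (· ∈ G)) ?_
      rintro ⟨t₁, ht₁⟩ ⟨t₂, ht₂⟩ hteq
      simp only [Subtype.mk.injEq] at hteq ⊢
      ext a
      constructor
      · intro ha
        have : (⟨a, ht₁ ha⟩ : G) ∈ t₁.subtype (· ∈ G) := Finset.mem_subtype.mpr ha
        rw [hteq] at this
        exact Finset.mem_subtype.mp this
      · intro ha
        have : (⟨a, ht₂ ha⟩ : G) ∈ t₂.subtype (· ∈ G) := Finset.mem_subtype.mpr ha
        rw [← hteq] at this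
        exact Finset.mem_subtype.mp this
    refine lt_of_le_of_lt hle ?_
    by_cases hGfin : G.Finite
    · haveI := hGfin.fintype
      exact lt_of_lt_of_le (lt_aleph0_of_finite (Finset G)) aleph0_le_continuum
    · haveI : Infinite G := Set.infinite_coe_iff.mpr hGfin
      rwa [mk_finset_of_infinite]
  obtain ⟨g, hg⟩ := nondominating hDcard
  -- the pseudo-intersection
  refine ⟨{m | ∃ n, m ∈ X' n ∧ n < m ∧ m ≤ g n}, ?_, ?_⟩
  · intro k
    apply Set.Finite.subset (Set.finite_Iic ((Finset.range k).sup g))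
    rintro m ⟨⟨n, hmX, hnm, hmg⟩, hmXk⟩
    have hnk : n < k := by
      by_contra hnk
      exact hmXk (hX'sub (not_lt.mp hnk) hmX)
    exact hmg.trans (Finset.le_sup (Finset.mem_range.mpr hnk))
  · apply fipinf_insert
    intro t ht
    apply Set.infinite_of_forall_exists_gt
    intro a
    have hFt : F t ∈ D := ⟨t, ht, rfl⟩
    obtain ⟨n, hna, hFgn⟩ := Filter.frequently_atTop.mp (hg (F t) hFt) (a + 1)
    obtain ⟨⟨hmem, hmX⟩, hnm⟩ := hFspec t ht n
    refine ⟨F t n, ⟨⟨n, hmX, hnm, le_of_lt hFgn⟩, hmem⟩, ?_⟩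
    exact lt_of_lt_of_le (Nat.lt_of_succ_le hna) (le_of_lt hnm)

/-! ### The transfinite construction -/

section Construction

/-- Index type: a well-order of order type `𝔠`. -/
abbrev IndexT : Type := Cardinal.continuum.ord.ToType

/-- Task type: decide a set, or handle a sequence of sets. -/
abbrev TaskT : Type := Set ℕ ⊕ (ℕ → Set ℕ)

variable (hd : dNumber = Cardinal.continuum) (task : IndexT → TaskT)

/-- One step of the construction. -/
noncomputable def step (x : IndexT) (G : Set (Set ℕ)) : Set ℕ :=
  Sum.elim
    (fun A => if FIPinf (insert A G) then A else Aᶜ)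
    (fun X => if h : FIPinf (G ∪ Set.range X) ∧ #G < Cardinal.continuum then
        (keyLemma hd h.2 h.1).choose
      else Set.univ)
    (task x)

/-- The generators, defined by transfinite recursion. -/
noncomputable def gen : IndexT → Set ℕ :=
  WellFounded.fix wellFounded_lt
    (fun x prior => step hd task x {s | ∃ y, ∃ hy : y < x, prior y hy = s})

/-- Generators appearing strictly before stage `x`. -/
def priorG (x : IndexT) : Set (Set ℕ) := {s | ∃ y, ∃ _ : y < x, gen hd task y = s}

/-- Generators appearing up to and including stage `x`. -/
def stageG (x : IndexT) : Set (Set ℕ) := {s | ∃ y, ∃ _ : y ≤ x, gen hd task y = s}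

lemma gen_eq (x : IndexT) : gen hd task x = step hd task x (priorG hd task x) := by
  rw [gen, WellFounded.fix_eq]
  rfl

lemma stageG_eq (x : IndexT) :
    stageG hd task x = insert (gen hd task x) (priorG hd task x) := by
  ext s
  simp only [stageG, priorG, Set.mem_insert_iff, Set.mem_setOf_eq]
  constructor
  · rintro ⟨y, hy, rfl⟩
    rcases lt_or_eq_of_le hy with h | h
    · exact Or.inr ⟨y, h, rfl⟩
    · exact Or.inl (by rw [h])
  · rintro (h | ⟨y, hy, rfl⟩)
    · exact ⟨x, le_rfl, h.symm⟩
    · exact ⟨y, le_of_lt hy, rfl⟩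

lemma prior_card (x : IndexT) : #(priorG hd task x) < Cardinal.continuum := by
  have h1 : priorG hd task x = gen hd task '' Set.Iio x := by
    ext s
    simp only [priorG, Set.mem_image, Set.mem_Iio, Set.mem_setOf_eq]
    exact ⟨fun ⟨y, hy, hh⟩ => ⟨y, hy, hh⟩, fun ⟨y, hy, hh⟩ => ⟨y, hy, hh⟩⟩
  rw [h1]
  exact lt_of_le_of_lt mk_image_le (Cardinal.mk_Iio_ord_toType x)

lemma stage_fip (x : IndexT) : FIPinf (stageG hd task x) := by
  induction x using WellFoundedLT.induction with
  | ind x IH =>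
  classical
  haveI : Nonempty IndexT := Ordinal.toType_nonempty_iff_ne_zero.mpr
    (fun h => Cardinal.continuum_ne_zero (Cardinal.ord_eq_zero.mp h))
  have hprior : FIPinf (priorG hd task x) := by
    intro t ht
    rcases t.eq_empty_or_nonempty with rfl | htne
    · simpa using Set.infinite_univ
    · set c : Set ℕ → IndexT := fun s =>
        if h : ∃ y, ∃ _ : y < x, gen hd task y = s then h.choose
        else Classical.arbitrary _ with hc
      have hcspec : ∀ s ∈ t, c s < x ∧ gen hd task (c s) = s := by
        intro s hs
        have h : ∃ y, ∃ _ : y < x, gen hd task y = s := ht hs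
        rw [hc]
        simp only [dif_pos h]
        exact ⟨h.choose_spec.choose, h.choose_spec.choose_spec⟩
      set y' := (t.image c).max' (htne.image c) with hy'
      have hy'x : y' < x := by
        have hmem := (t.image c).max'_mem (htne.image c)
        rw [← hy'] at hmem
        obtain ⟨s, hs, hcs⟩ := Finset.mem_image.mp hmem
        exact hcs ▸ (hcspec s hs).1
      have hsub : ↑t ⊆ stageG hd task y' := by
        intro s hs
        exact ⟨c s, Finset.le_max' _ _ (Finset.mem_image_of_mem c hs), (hcspec s hs).2⟩
      exact IH y' hy'x t hsub
  rw [stageG_eq, gen_eq]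
  rcases htask : task x with A | X
  · unfold step
    rw [htask, Sum.elim_inl]
    by_cases hA : FIPinf (insert A (priorG hd task x))
    · rwa [if_pos hA]
    · rw [if_neg hA]
      rcases fipinf_dichotomy hprior A with h | h
      · exact absurd h hA
      · exact h
  · unfold step
    rw [htask, Sum.elim_inr]
    by_cases hcond : FIPinf (priorG hd task x ∪ Set.range X) ∧
        #(priorG hd task x) < Cardinal.continuum
    · rw [dif_pos hcond]
      exact (keyLemma hd hcond.2 hcond.1).choose_spec.2
    · rw [dif_neg hcond]
      apply fipinf_insert
      intro t ht
      simpa using hprior t ht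

lemma total_fip : FIPinf (Set.range (gen hd task)) := by
  classical
  haveI : Nonempty IndexT := Ordinal.toType_nonempty_iff_ne_zero.mpr
    (fun h => Cardinal.continuum_ne_zero (Cardinal.ord_eq_zero.mp h))
  intro t ht
  rcases t.eq_empty_or_nonempty with rfl | htne
  · simpa using Set.infinite_univ
  · set c : Set ℕ → IndexT := fun s =>
      if h : ∃ y, gen hd task y = s then h.choose else Classical.arbitrary _ with hc
    have hcspec : ∀ s ∈ t, gen hd task (c s) = s := by
      intro s hs
      have h : ∃ y, gen hd task y = s := ht hs
      rw [hc]
      simp only [dif_pos h]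
      exact h.choose_spec
    set y' := (t.image c).max' (htne.image c)
    have hsub : ↑t ⊆ stageG hd task y' := by
      intro s hs
      exact ⟨c s, Finset.le_max' _ _ (Finset.mem_image_of_mem c hs), hcspec s hs⟩
    exact stage_fip hd task y' t hsub

end Construction

/-- if `𝔡 = 𝔠`, then there exists a P-point: a nonprincipal ultrafilter `u`
on `ω` such that for every sequence `⟨Xₙ⟩` of elements of `u` there is `Y ∈ u` with
`Y ∖ Xₙ` finite for every `n`. -/
theorem stmt14 (h : dNumber = Cardinal.continuum) :
    ∃ u : Ultrafilter ℕ, (∀ a : ℕ, u ≠ pure a) ∧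
      ∀ X : ℕ → Set ℕ, (∀ n, X n ∈ u) → ∃ Y ∈ u, ∀ n, (Y \ X n).Finite := by
  classical
  -- a surjective enumeration of tasks
  have hset : #(Set ℕ) = Cardinal.continuum := by
    rw [Cardinal.mk_set, Cardinal.mk_nat, Cardinal.two_power_aleph0]
  have harrow : #(ℕ → Set ℕ) = Cardinal.continuum := by
    rw [Cardinal.mk_arrow]
    simp only [Cardinal.lift_id, hset, Cardinal.mk_nat]
    exact Cardinal.continuum_power_aleph0
  have hcard : #TaskT = #IndexT := by
    rw [show #IndexT = Cardinal.continuum from Cardinal.mk_ord_toType _]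
    rw [Cardinal.mk_sum]
    simp only [Cardinal.lift_id, hset, harrow]
    exact Cardinal.add_eq_self aleph0_le_continuum
  obtain ⟨e⟩ := Cardinal.eq.mp hcard.symm
  set task : IndexT → TaskT := ⇑e with htaskdef
  have htasksurj : Function.Surjective task := e.surjective
  set 𝒢 : Set (Set ℕ) := Set.range (gen h task) with h𝒢
  have hfip : FIPinf 𝒢 := total_fip h task
  set F : Filter ℕ := Filter.generate 𝒢 with hF
  -- every member of F is infinite
  have hFinf : ∀ s ∈ F, s.Infinite := by
    intro s hs
    rw [hF, Filter.mem_generate_iff] at hs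
    obtain ⟨t, htsub, htfin, hts⟩ := hs
    have hIf : (⋂₀ (↑htfin.toFinset : Set (Set ℕ))).Infinite :=
      hfip htfin.toFinset (by simpa using htsub)
    rw [Set.Finite.coe_toFinset] at hIf
    exact hIf.mono hts
  -- F decides every set
  have hdec : ∀ s : Set ℕ, s ∈ F ∨ sᶜ ∈ F := by
    intro s
    obtain ⟨x, hx⟩ := htasksurj (Sum.inl s)
    have hgenmem : gen h task x ∈ F := Filter.mem_generate_of_mem ⟨x, rfl⟩
    rw [gen_eq] at hgenmem
    unfold step at hgenmem
    rw [hx, Sum.elim_inl] at hgenmem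
    by_cases hA : FIPinf (insert s (priorG h task x))
    · rw [if_pos hA] at hgenmem; exact Or.inl hgenmem
    · rw [if_neg hA] at hgenmem; exact Or.inr hgenmem
  have hultra : ∀ s : Set ℕ, sᶜ ∉ F ↔ s ∈ F := by
    intro s
    constructor
    · intro hsc
      rcases hdec s with h1 | h1
      · exact h1
      · exact absurd h1 hsc
    · intro hs hsc
      have hmem : s ∩ sᶜ ∈ F := Filter.inter_mem hs hsc
      rw [Set.inter_compl_self] at hmem
      exact (hFinf ∅ hmem) Set.finite_empty
  set u : Ultrafilter ℕ := Ultrafilter.ofComplNotMemIff F hultra with hu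
  have humem : ∀ s : Set ℕ, s ∈ u ↔ s ∈ F := fun s => Iff.rfl
  refine ⟨u, ?_, ?_⟩
  · intro a ha
    have h1 : {a} ∈ u := by
      rw [ha]; exact Ultrafilter.mem_pure.mpr rfl
    exact (hFinf {a} ((humem _).mp h1)) (Set.finite_singleton a)
  · intro X hX
    obtain ⟨x, hx⟩ := htasksurj (Sum.inr X)
    have hcond : FIPinf (priorG h task x ∪ Set.range X) ∧
        #(priorG h task x) < Cardinal.continuum := by
      constructor
      · intro t ht
        apply hFinf
        rw [Filter.sInter_mem t.finite_toSet]
        intro U hU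
        rcases ht hU with h1 | h1
        · obtain ⟨y, _, rfl⟩ := h1
          exact Filter.mem_generate_of_mem ⟨y, rfl⟩
        · obtain ⟨n, rfl⟩ := h1
          exact (humem _).mp (hX n)
      · exact prior_card h task x
    have hgen : gen h task x = (keyLemma h hcond.2 hcond.1).choose := by
      rw [gen_eq]
      unfold step
      rw [hx, Sum.elim_inr, dif_pos hcond]
    refine ⟨gen h task x, (humem _).mpr (Filter.mem_generate_of_mem ⟨x, rfl⟩), ?_⟩
    rw [hgen]
    exact (keyLemma h hcond.2 hcond.1).choose_spec.1
end

section
/- Let 𝔵 = ⟨A,B,E⟩ and 𝔶 = ⟨C,D,E'⟩ be triples with E ⊆ A × B and E' ⊆ C × D, let φ = ⟨φ₁, φ₂⟩ be a morphism from 𝔵 to 𝔶 (i.e. φ₁ : C → A, φ₂ : B → D, and for all c ∈ C and b ∈ B, φ₁(c) E b implies c E' φ₂(b)), fix d₀ ∈ D, and let ℱ be a family of finitary operations on B each compatible with φ₂. For each n-ary F ∈ ℱ define φ(F) : Dⁿ → D by φ(F)(d₁,…,dₙ) = φ₂(F(b₁,…,bₙ)) if dᵢ = φ₂(bᵢ)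 for all i, and φ(F)(d₁,…,dₙ) = d₀ if some dᵢ ∉ ran(φ₂); compatibility makes φ(F) well defined. If for a cardinal κ there exists a ⟨𝔶, {φ(F) : F ∈ ℱ}, κ⟩-pathway, then there exists a ⟨𝔵, ℱ, κ⟩-pathway. -/
open Cardinal Set

/-- A finitary operation `F` on `B` is compatible with `φ₂ : B → D` if `φ₂`-equality of
the arguments implies `φ₂`-equality of the values. -/
def Compatible {B D : Type*} (φ₂ : B → D) (F : Σ n : ℕ, (Fin n → B) → B) : Prop :=
  ∀ x y : Fin F.1 → B, (∀ i, φ₂ (x i) = φ₂ (y i)) → φ₂ (F.2 x) = φ₂ (F.2 y)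

open Classical in
/-- The operation `φ(F)` on `D` induced by `F` on `B` via `φ₂`, using the fixed default
value `d₀` when some argument is not in the range of `φ₂`. -/
noncomputable def pushOp {B D : Type*} (φ₂ : B → D) (d₀ : D)
    (F : Σ n : ℕ, (Fin n → B) → B) : Σ n : ℕ, (Fin n → D) → D :=
  ⟨F.1, fun v =>
    if h : ∀ i, v i ∈ Set.range φ₂ then
      φ₂ (F.2 (fun i => (Set.mem_range.mp (h i)).choose))
    else d₀⟩

/-- if `φ = ⟨φ₁, φ₂⟩` is a morphism from `𝔵 = ⟨A,B,E⟩` to `𝔶 = ⟨C,D,E'⟩`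
and `𝓕` is a family of finitary operations on `B` compatible with `φ₂`, then the
existence of a `⟨𝔶, φ(𝓕), κ⟩`-pathway implies the existence of an `⟨𝔵, 𝓕, κ⟩`-pathway. -/
theorem stmt16 {A B C D : Type u} (E : A → B → Prop) (E' : C → D → Prop)
    (φ₁ : C → A) (φ₂ : B → D)
    (hmor : ∀ (c : C) (b : B), E (φ₁ c) b → E' c (φ₂ b))
    (d₀ : D) (𝓕 : Set (Σ n : ℕ, (Fin n → B) → B))
    (hcomp : ∀ F ∈ 𝓕, Compatible φ₂ F)
    (κ : Cardinal.{u}) (seq : Ordinal → Set D)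
    (hpath : IsPathway E' (pushOp φ₂ d₀ '' 𝓕) κ.ord seq) :
    ∃ seq' : Ordinal → Set B, IsPathway E 𝓕 κ.ord seq' := by
  refine ⟨fun α => φ₂ ⁻¹' seq α, ?_, ?_, ?_, ?_, ?_⟩
  · intro α β hle hlt
    exact Set.preimage_mono (hpath.mono α β hle hlt)
  · intro γ hγ hlim
    rw [hpath.cont γ hγ hlim]
    ext b; simp
  · ext b
    simp only [Set.mem_iUnion, Set.mem_preimage, Set.mem_univ, iff_true]
    have := hpath.total
    have hb : φ₂ b ∈ (⋃ α : Ordinal, ⋃ _ : α < κ.ord, seq α) := by rw [this]; trivial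
    simpa using hb
  · intro α hα
    obtain ⟨c, hc⟩ := hpath.avoid α hα
    exact ⟨φ₁ c, fun y hy hE => hc (φ₂ y) hy (hmor c y hE)⟩
  · intro α hα F hF v hv
    have hclosed := hpath.closedF α hα (pushOp φ₂ d₀ F) ⟨F, hF, rfl⟩
    have h := hclosed (fun i => φ₂ (v i)) (fun i => hv i)
    simp only [pushOp] at h
    have hr : ∀ i : Fin F.1, φ₂ (v i) ∈ Set.range φ₂ := fun i => ⟨v i, rfl⟩
    rw [dif_pos hr] at h
    have heq : φ₂ (F.2 (fun i => (Set.mem_range.mp (hr i)).choose) ) = φ₂ (F.2 v) := by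
      apply hcomp F hF
      intro i
      exact (Set.mem_range.mp (hr i)).choose_spec
    rw [heq] at h
    exact h
end
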